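/- arXiv:1506.02951 — 2 statements merged into one kernel-verified Lean document; each statement's English description precedes it below -/
import Mathlib

section
/- For 0 < β < 1 and c > 0, c^β + ∫₀^∞ (1 - e^{-φt}) (β/Γ(1-β)) t^{-β-1} e^{-ct} dt = (φ + c)^β for all φ > 0. -/
open MeasureTheory Set
open Real Filter Topology

private lemma intAux {s r : ℝ} (hs : -1 < s) (hr : 0 < r) :
    IntegrableOn (fun t : ℝ => t ^ s * Real.exp (-(r * t))) (Ioi 0) := by
  simpa [Real.rpow_one, neg_mul] using
    integrableOn_rpow_mul_exp_neg_mul_rpow hs zero_lt_one hr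

private lemma valAux {β r : ℝ} (hβ1 : β < 1) (hr : 0 < r) :
    ∫ t in Ioi (0:ℝ), t ^ (-β) * Real.exp (-(r * t))
      = r ^ (β - 1) * Real.Gamma (1 - β) := by
  have h := Real.integral_rpow_mul_exp_neg_mul_Ioi (a := 1 - β) (r := r) (by linarith) hr
  have h2 : (1:ℝ) - β - 1 = -β := by ring
  rw [h2] at h
  rw [h, one_div, ← Real.rpow_neg_one r, ← Real.rpow_mul hr.le]
  norm_num

/-- For `0 < β < 1` and `c > 0`,
`c^β + ∫₀^∞ (1 - e^{-φt}) (β/Γ(1-β)) t^{-β-1} e^{-ct} dt = (φ+c)^β` for all `φ > 0`. -/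
theorem stmt4 (β c : ℝ) (hβ : 0 < β) (hβ1 : β < 1) (hc : 0 < c) :
    ∀ φ > (0:ℝ),
      c ^ β + ∫ t in Set.Ioi (0:ℝ),
        (1 - Real.exp (-φ * t)) * ((β / Real.Gamma (1 - β)) * t ^ (-β - 1) * Real.exp (-c * t))
        = (φ + c) ^ β := by
  intro φ hφ
  have hφc : 0 < φ + c := by linarith
  have hΓ : 0 < Real.Gamma (1 - β) := Real.Gamma_pos_of_pos (by linarith)
  set f : ℝ → ℝ := fun t => Real.exp (-(c * t)) - Real.exp (-((φ + c) * t)) with hfdef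
  set g : ℝ → ℝ := fun t => -(t ^ (-β)) / β with hgdef
  set f' : ℝ → ℝ := fun t =>
    -c * Real.exp (-(c * t)) + (φ + c) * Real.exp (-((φ + c) * t)) with hf'def
  -- pointwise identity with the statement's integrand
  have key : ∀ t : ℝ,
      (1 - Real.exp (-φ * t)) * ((β / Real.Gamma (1 - β)) * t ^ (-β - 1) * Real.exp (-c * t))
        = (β / Real.Gamma (1 - β)) * (f t * t ^ (-β - 1)) := by
    intro t
    have h : Real.exp (-((φ + c) * t)) = Real.exp (-φ * t) * Real.exp (-(c * t)) := by
      rw [← Real.exp_add]; ring_nf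
    simp only [hfdef, h, neg_mul]
    ring
  -- integrabilities
  have int1 : IntegrableOn (fun t : ℝ => t ^ (-β) * Real.exp (-(c * t))) (Ioi 0) :=
    intAux (by linarith) hc
  have int2 : IntegrableOn (fun t : ℝ => t ^ (-β) * Real.exp (-((φ + c) * t))) (Ioi 0) :=
    intAux (by linarith) hφc
  have fbound : ∀ t : ℝ, 0 < t → f t ≤ φ * t * Real.exp (-(c * t)) := by
    intro t ht
    have h1 : 1 - Real.exp (-(φ * t)) ≤ φ * t := by
      nlinarith [Real.add_one_le_exp (-(φ * t))]
    have h3 : Real.exp (-((φ + c) * t)) = Real.exp (-(c * t)) * Real.exp (-(φ * t)) := by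
      rw [← Real.exp_add]; ring_nf
    have : f t = Real.exp (-(c*t)) * (1 - Real.exp (-(φ * t))) := by
      simp only [hfdef, h3]; ring
    rw [this]
    have := Real.exp_pos (-(c*t))
    nlinarith
  have fnonneg : ∀ t : ℝ, 0 < t → 0 ≤ f t := by
    intro t ht
    simp only [hfdef]
    have : -((φ + c) * t) ≤ -(c * t) := by nlinarith
    have := Real.exp_le_exp.mpr this
    linarith
  have intG : IntegrableOn (fun t : ℝ => f t * t ^ (-β - 1)) (Ioi 0) := by
    apply Integrable.mono' (int1.const_mul φ)
    · apply ContinuousOn.aestronglyMeasurable _ measurableSet_Ioi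
      intro t ht
      exact ((Continuous.continuousWithinAt (by continuity)).mul
        ((Real.continuousAt_rpow_const t _ (Or.inl (ne_of_gt ht))).continuousWithinAt))
    · filter_upwards [ae_restrict_mem measurableSet_Ioi] with t ht
      have ht : 0 < t := ht
      have h1 : 0 ≤ f t := fnonneg t ht
      have h2 : (0:ℝ) < t ^ (-β - 1) := Real.rpow_pos_of_pos ht _
      rw [Real.norm_eq_abs, abs_of_nonneg (by positivity)]
      have h3 : f t * t ^ (-β - 1) ≤ (φ * t * Real.exp (-(c*t))) * t ^ (-β - 1) :=
        mul_le_mul_of_nonneg_right (fbound t ht) h2.le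
      have h4 : t * t ^ (-β - 1) = t ^ (-β) := by
        nth_rewrite 1 [← Real.rpow_one t]
        rw [← Real.rpow_add ht]; norm_num
      calc f t * t ^ (-β - 1) ≤ (φ * t * Real.exp (-(c*t))) * t ^ (-β - 1) := h3
        _ = φ * (t ^ (-β) * Real.exp (-(c * t))) := by
            rw [← h4]; ring
  -- f' * g rewritten
  have hfg : (fun t : ℝ => f' t * g t)
      = fun t : ℝ => (c / β) * (t ^ (-β) * Real.exp (-(c * t)))
          - ((φ + c) / β) * (t ^ (-β) * Real.exp (-((φ + c) * t))) := by
    funext t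
    simp only [hf'def, hgdef]
    ring
  have intf'g : IntegrableOn (fun t : ℝ => f' t * g t) (Ioi 0) := by
    rw [hfg]
    exact (int1.const_mul _).sub (int2.const_mul _)
  have intF' : IntegrableOn
      (fun t : ℝ => f' t * g t + f t * t ^ (-β - 1)) (Ioi 0) := intf'g.add intG
  -- derivative
  have derivF : ∀ t ∈ Ioi (0:ℝ),
      HasDerivAt (fun t => f t * g t) (f' t * g t + f t * t ^ (-β - 1)) t := by
    intro t ht
    have e1 : HasDerivAt (fun x : ℝ => Real.exp (-(c * x)))
        (Real.exp (-(c * t)) * (-c)) t := by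
      have := (((hasDerivAt_id t).const_mul c).neg).exp
      simpa using this
    have e2 : HasDerivAt (fun x : ℝ => Real.exp (-((φ + c) * x)))
        (Real.exp (-((φ + c) * t)) * (-(φ + c))) t := by
      have := (((hasDerivAt_id t).const_mul (φ + c)).neg).exp
      simpa using this
    have hf' : HasDerivAt f (f' t) t := by
      have := e1.sub e2
      refine this.congr_deriv ?_
      simp only [hf'def]; ring
    have hr : HasDerivAt (fun x : ℝ => x ^ (-β)) (-β * t ^ (-β - 1)) t :=
      Real.hasDerivAt_rpow_const (Or.inl (ne_of_gt ht))
    have hg : HasDerivAt g (t ^ (-β - 1)) t := by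
      have := (hr.neg).div_const β
      refine this.congr_deriv ?_
      field_simp
    exact hf'.mul hg
  -- continuity at 0 within Ici 0
  have hF0 : f 0 * g 0 = 0 := by
    simp [hfdef]
  have contF : ContinuousWithinAt (fun t => f t * g t) (Ici 0) 0 := by
    rw [ContinuousWithinAt, hF0]
    apply squeeze_zero_norm' (a := fun t : ℝ => (φ / β) * t ^ ((1:ℝ) - β))
    · filter_upwards [self_mem_nhdsWithin] with t (ht : (0:ℝ) ≤ t)
      rcases eq_or_lt_of_le ht with h | h
      · simp [← h, hF0, Real.zero_rpow (show (1:ℝ) - β ≠ 0 by linarith)]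
      · have h1 : 0 ≤ f t := fnonneg t h
        have hE : Real.exp (-(c * t)) ≤ 1 :=
          Real.exp_le_one_iff.mpr (by nlinarith)
        have h2 : |g t| = t ^ (-β) / β := by
          simp only [hgdef, neg_div]
          rw [abs_neg, abs_of_nonneg (by positivity)]
        have hpow : t ^ ((1:ℝ) - β) = t * t ^ (-β) := by
          rw [show (1:ℝ) - β = 1 + -β by ring, Real.rpow_add h, Real.rpow_one]
        have hp1 : (0:ℝ) < t ^ (-β) := Real.rpow_pos_of_pos h _
        rw [Real.norm_eq_abs, abs_mul, abs_of_nonneg h1, h2, hpow]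
        calc f t * (t ^ (-β) / β)
            ≤ (φ * t * Real.exp (-(c * t))) * (t ^ (-β) / β) := by
              apply mul_le_mul_of_nonneg_right (fbound t h) (by positivity)
          _ ≤ (φ * t * 1) * (t ^ (-β) / β) := by
              have hX : (0:ℝ) ≤ t ^ (-β) / β := by positivity
              apply mul_le_mul_of_nonneg_right _ hX
              nlinarith [hE, mul_pos hφ h]
          _ = φ / β * (t * t ^ (-β)) := by ring
    · have hca : ContinuousAt (fun t : ℝ => t ^ ((1:ℝ) - β)) 0 :=
        Real.continuousAt_rpow_const 0 _ (Or.inr (by linarith))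
      have := (hca.tendsto.mono_left
        (nhdsWithin_le_nhds : 𝓝[Set.Ici (0:ℝ)] 0 ≤ 𝓝 0)).const_mul (φ / β)
      simpa [Real.zero_rpow (show (1:ℝ) - β ≠ 0 by linarith)] using this
  -- limit at infinity
  have tendF : Filter.Tendsto (fun t => f t * g t) Filter.atTop (nhds 0) := by
    have hc1 : Filter.Tendsto (fun t : ℝ => c * t) Filter.atTop Filter.atTop :=
      Filter.Tendsto.const_mul_atTop hc Filter.tendsto_id
    have hc2 : Filter.Tendsto (fun t : ℝ => (φ + c) * t) Filter.atTop Filter.atTop :=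
      Filter.Tendsto.const_mul_atTop hφc Filter.tendsto_id
    have e1 : Filter.Tendsto (fun t : ℝ => Real.exp (-(c * t))) Filter.atTop (nhds 0) :=
      Real.tendsto_exp_neg_atTop_nhds_zero.comp hc1
    have e2 : Filter.Tendsto (fun t : ℝ => Real.exp (-((φ + c) * t))) Filter.atTop (nhds 0) :=
      Real.tendsto_exp_neg_atTop_nhds_zero.comp hc2
    have hfT : Filter.Tendsto f Filter.atTop (nhds 0) := by
      simpa using e1.sub e2
    have hgT : Filter.Tendsto g Filter.atTop (nhds 0) := by
      have := (tendsto_rpow_neg_atTop hβ).neg.div_const β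
      simpa using this
    simpa using hfT.mul hgT
  -- FTC / integration by parts
  have ftc := MeasureTheory.integral_Ioi_of_hasDerivAt_of_tendsto contF derivF intF' tendF
  rw [hF0, zero_sub, neg_zero] at ftc
  have hsplit : ∫ t in Ioi (0:ℝ), (f' t * g t + f t * t ^ (-β - 1))
      = (∫ t in Ioi (0:ℝ), f' t * g t) + ∫ t in Ioi (0:ℝ), f t * t ^ (-β - 1) :=
    MeasureTheory.integral_add intf'g intG
  -- evaluate ∫ f' g
  have hval : ∫ t in Ioi (0:ℝ), f' t * g t
      = (c / β) * (c ^ (β - 1) * Real.Gamma (1 - β))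
        - ((φ + c) / β) * ((φ + c) ^ (β - 1) * Real.Gamma (1 - β)) := by
    rw [hfg, integral_sub (int1.const_mul _) (int2.const_mul _),
      integral_const_mul, integral_const_mul,
      valAux hβ1 hc, valAux hβ1 hφc]
  have hrc : c * c ^ (β - 1) = c ^ β := by
    have h := (Real.rpow_add hc 1 (β - 1)).symm
    rw [Real.rpow_one] at h
    rw [h, show (1:ℝ) + (β - 1) = β by ring]
  have hrφ : (φ + c) * (φ + c) ^ (β - 1) = (φ + c) ^ β := by
    have h := (Real.rpow_add hφc 1 (β - 1)).symm
    rw [Real.rpow_one] at h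
    rw [h, show (1:ℝ) + (β - 1) = β by ring]
  -- final value of ∫ f * t^(-β-1)
  have hG : ∫ t in Ioi (0:ℝ), f t * t ^ (-β - 1)
      = Real.Gamma (1 - β) / β * ((φ + c) ^ β - c ^ β) := by
    have := hsplit.symm.trans ftc
    have h2 : ∫ t in Ioi (0:ℝ), f t * t ^ (-β - 1)
        = -(∫ t in Ioi (0:ℝ), f' t * g t) := by linarith
    rw [h2, hval]
    field_simp
    nlinarith [hrc, hrφ]
  -- conclude
  have hcongr : ∫ t in Ioi (0:ℝ),
      (1 - Real.exp (-φ * t)) * (β / Real.Gamma (1 - β) * t ^ (-β - 1) * Real.exp (-c * t))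
      = ∫ t in Ioi (0:ℝ), β / Real.Gamma (1 - β) * (f t * t ^ (-β - 1)) := by
    congr 1
    funext t
    exact key t
  rw [hcongr, integral_const_mul, hG]
  field_simp
  ring
end

section
/- Let f be a Bernstein function with b = 0 and ν(0,∞) = ∞, let q(λ,t) be the continuous exponentially bounded solution with Laplace transform (in t) equal to (f(φ)/φ)·1/(f(φ)−λ) for λ < 0 fixed, and suppose f is regularly varying at 0+ with index ρ ∈ [0,1). Then Q(λ,t) = ∫₀^t q(λ,s) ds → ∞ as t → ∞; that is, ∫₀^∞ q(λ,t) dt = ∞. -/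
set_option maxHeartbeats 1000000

open Finset

namespace S19

/-- forward difference operator on sequences -/
def D (u : ℕ → ℝ) : ℕ → ℝ := fun k => u (k+1) - u k

/-- iterated difference -/
def Dn : ℕ → (ℕ → ℝ) → (ℕ → ℝ)
  | 0, u => u
  | (m+1), u => D (Dn m u)

@[simp] lemma Dn_zero (u : ℕ → ℝ) : Dn 0 u = u := rfl
lemma Dn_succ (m : ℕ) (u : ℕ → ℝ) : Dn (m+1) u = D (Dn m u) := rfl

lemma Dn_shift (m : ℕ) (u : ℕ → ℝ) (i : ℕ) :
    Dn m (fun k => u (k+i)) = fun k => Dn m u (k+i) := by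
  induction m with
  | zero => rfl
  | succ m ih =>
      funext k
      simp only [Dn_succ, D, ih]
      have : k + 1 + i = k + i + 1 := by omega
      rw [this]

lemma Dn_add (m j : ℕ) (u : ℕ → ℝ) : Dn (m+j) u = Dn m (Dn j u) := by
  induction m with
  | zero => simp
  | succ m ih =>
      have : m + 1 + j = (m + j) + 1 := by omega
      rw [this, Dn_succ, Dn_succ, ih]

/-- Leibniz rule for iterated differences -/
lemma Dn_mul (m : ℕ) (u v : ℕ → ℝ) (k : ℕ) :
    Dn m (fun i => u i * v i) k
      = ∑ j ∈ range (m+1), (m.choose j : ℝ) * Dn (m-j) u (k+j) * Dn j v k := by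
  induction m generalizing k with
  | zero => simp [Dn]
  | succ m ih =>
      rw [Dn_succ]
      show Dn m (fun i => u i * v i) (k+1) - Dn m (fun i => u i * v i) k = _
      rw [ih (k+1), ih k, ← Finset.sum_sub_distrib]
      have expand : ∀ j ∈ range (m+1),
          (m.choose j : ℝ) * Dn (m-j) u (k+1+j) * Dn j v (k+1)
            - (m.choose j : ℝ) * Dn (m-j) u (k+j) * Dn j v k
          = ((m.choose j : ℝ) * Dn (m-j) u (k+(j+1)) * Dn (j+1) v k)
            + ((m.choose j : ℝ) * Dn (m-j+1) u (k+j) * Dn j v k) := by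
        intro j hj
        have h1 : k + 1 + j = k + (j+1) := by omega
        have h2 : Dn (j+1) v k = Dn j v (k+1) - Dn j v k := by
          rw [Dn_succ]; rfl
        have h3 : Dn (m-j+1) u (k+j) = Dn (m-j) u (k+j+1) - Dn (m-j) u (k+j) := by
          have e : m - j + 1 = 1 + (m-j) := by omega
          rw [e, Dn_add 1 (m-j)]
          rfl
        have h4 : Dn (m-j) u (k+(j+1)) = Dn (m-j) u (k+j+1) := rfl
        rw [h1, h2, h3, h4]
        try ring
      rw [Finset.sum_congr rfl expand, Finset.sum_add_distrib]
      set A : ℕ → ℝ := fun j => (m.choose j : ℝ) * Dn (m-j) u (k+(j+1)) * Dn (j+1) v k with hA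
      set B : ℕ → ℝ := fun j => (m.choose j : ℝ) * Dn (m-j+1) u (k+j) * Dn j v k with hB
      set g : ℕ → ℝ := fun j => if j = 0 then 0 else (m.choose (j-1) : ℝ) * Dn (m-(j-1)) u (k+j) * Dn j v k with hg
      set h : ℕ → ℝ := fun j => if j = m+1 then 0 else (m.choose j : ℝ) * Dn (m-j+1) u (k+j) * Dn j v k with hh
      have hgA : ∑ j ∈ range (m+2), g j = ∑ j ∈ range (m+1), A j := by
        rw [Finset.sum_range_succ' g (m+1)]
        simp [hg, hA]
      have hhB : ∑ j ∈ range (m+2), h j = ∑ j ∈ range (m+1), B j := by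
        rw [Finset.sum_range_succ]
        simp only [hh, if_pos rfl, add_zero]
        apply Finset.sum_congr rfl
        intro j hj
        simp only [Finset.mem_range] at hj
        rw [if_neg (by omega)]
      rw [← hgA, ← hhB, ← Finset.sum_add_distrib]
      apply Finset.sum_congr rfl
      intro j hj
      simp only [Finset.mem_range] at hj
      rcases Nat.eq_zero_or_pos j with h0 | hpos
      · subst h0
        simp [hg, hh, hA, hB]
      · rcases Nat.lt_or_ge j (m+1) with hlt2 | hge2
        · have hjm : j ≤ m := by omega
          simp only [hg, hh, if_neg (by omega : ¬ j = 0), if_neg (by omega : ¬ j = m+1)]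
          have hc : ((m+1).choose j : ℝ) = (m.choose (j-1) : ℝ) + (m.choose j : ℝ) := by
            obtain ⟨i, rfl⟩ : ∃ i, j = i + 1 := ⟨j-1, by omega⟩
            rw [Nat.choose_succ_succ]
            push_cast
            try simp
            try ring
          have hm1 : m + 1 - j = m - j + 1 := by omega
          have hm2 : m - (j-1) = m - j + 1 := by omega
          rw [hc, hm1, hm2]
          ring
        · have hj1 : j = m + 1 := by omega
          subst hj1
          simp only [hg, hh, if_neg (by omega : ¬ m+1 = 0), if_pos rfl]
          have e1 : m + 1 - (m+1) = 0 := by omega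
          have e3 : m + 1 - 1 = m := by omega
          rw [e1, e3, Nat.sub_self, Nat.choose_self, Nat.choose_self]
          simp

/-- CM up to order m -/
def CMle (m : ℕ) (u : ℕ → ℝ) : Prop := ∀ j ≤ m, ∀ k, 0 ≤ (-1:ℝ)^j * Dn j u k

lemma CMle.shift {m : ℕ} {u : ℕ → ℝ} (h : CMle m u) (i : ℕ) :
    CMle m (fun k => u (k+i)) := by
  intro j hj k
  rw [Dn_shift]
  exact h j hj (k+i)

lemma CMle.mul {m : ℕ} {u v : ℕ → ℝ} (hu : CMle m u) (hv : CMle m v) :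
    CMle m (fun k => u k * v k) := by
  intro j hj k
  rw [Dn_mul, Finset.mul_sum]
  apply Finset.sum_nonneg
  intro i hi
  simp only [Finset.mem_range] at hi
  have h1 : 0 ≤ (-1:ℝ)^(j-i) * Dn (j-i) u (k+i) := hu (j-i) (by omega) (k+i)
  have h2 : 0 ≤ (-1:ℝ)^i * Dn i v k := hv i (by omega) k
  have hsign : (-1:ℝ)^j = (-1:ℝ)^(j-i) * (-1:ℝ)^i := by
    rw [← pow_add]
    congr 1; omega
  calc (0:ℝ) ≤ ((-1:ℝ)^(j-i) * Dn (j-i) u (k+i)) * ((-1:ℝ)^i * Dn i v k) * (j.choose i : ℝ) := by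
        positivity
    _ = (-1:ℝ)^j * ((j.choose i : ℝ) * Dn (j-i) u (k+i) * Dn i v k) := by
        rw [hsign]; ring

lemma Dn_const_mul (c : ℝ) (w : ℕ → ℝ) (m : ℕ) :
    Dn m (fun k => c * w k) = fun k => c * Dn m w k := by
  induction m with
  | zero => rfl
  | succ m ih =>
      funext k
      rw [Dn_succ, Dn_succ]
      show Dn m (fun k => c * w k) (k+1) - Dn m (fun k => c * w k) k = _
      rw [ih]
      show c * Dn m w (k+1) - c * Dn m w k = c * (Dn m w (k+1) - Dn m w k)
      ring

/-- reciprocal lemma: if b > 0 and Δb is completely monotone (all orders),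
then 1/b is CM up to any order. -/
lemma CMle.inv (m : ℕ) : ∀ (b : ℕ → ℝ), (∀ k, 0 < b k) → (∀ m', CMle m' (D b)) →
    CMle m (fun k => 1 / b k) := by
  induction m with
  | zero =>
      intro b hb hd j hj k
      interval_cases j
      have := hb k
      simp only [Dn_zero, pow_zero, one_mul]
      positivity
  | succ m ih =>
      intro b hb hd j hj k
      rcases Nat.lt_or_ge j (m+1) with hlt | hge
      · exact ih b hb hd j (by omega) k
      · have hj2 : j = m + 1 := by omega
        subst hj2
        have hrw : Dn (m+1) (fun k => 1 / b k) = Dn m (Dn 1 (fun k => 1 / b k)) := by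
          rw [← Dn_add m 1]
        have hD : Dn 1 (fun k => 1 / b k)
            = fun k => (-1 : ℝ) * (D b k * ((1 / b k) * (1 / b (k+1)))) := by
          funext k
          have h1 : b k ≠ 0 := ne_of_gt (hb k)
          have h2 : b (k+1) ≠ 0 := ne_of_gt (hb (k+1))
          show 1 / b (k+1) - 1 / b k = (-1 : ℝ) * ((b (k+1) - b k) * ((1 / b k) * (1 / b (k+1))))
          field_simp
          try ring
          try tauto
        have hP : CMle m (fun k => D b k * ((1 / b k) * (1 / b (k+1)))) := by
          have hu2 : CMle m (fun k => (1 / b k) * (1 / b (k+1))) := by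
            have hs := (ih b hb hd).shift 1
            exact CMle.mul (ih b hb hd) hs
          exact CMle.mul (hd m) hu2
        have hval := hP m le_rfl k
        rw [hrw, hD, Dn_const_mul]
        have : (-1:ℝ)^(m+1) * ((-1) * Dn m (fun k => D b k * ((1 / b k) * (1 / b (k+1)))) k)
            = (-1:ℝ)^m * Dn m (fun k => D b k * ((1 / b k) * (1 / b (k+1)))) k := by
          rw [pow_succ]
          ring
        rw [this]
        exact hval

/-- evaluation of iterated differences -/
lemma Dn_eval (j : ℕ) (u : ℕ → ℝ) (k : ℕ) :
    Dn j u k = ∑ i ∈ range (j+1), (-1:ℝ)^(j-i) * (j.choose i : ℝ) * u (k+i) := by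
  induction j generalizing k with
  | zero => simp
  | succ j ih =>
      rw [Dn_succ]
      show Dn j u (k+1) - Dn j u k = _
      rw [ih (k+1), ih k, ← Finset.sum_sub_distrib]
      set g : ℕ → ℝ := fun i => if i = 0 then 0 else (-1:ℝ)^(j-(i-1)) * (j.choose (i-1) : ℝ) * u (k+i) with hg
      set h : ℕ → ℝ := fun i => if i = j+1 then 0 else (-1:ℝ)^(j+1-i) * (j.choose i : ℝ) * u (k+i) with hh
      have hgs : ∑ i ∈ range (j+2), g i
          = ∑ i ∈ range (j+1), (-1:ℝ)^(j-i) * (j.choose i : ℝ) * u (k+1+i) := by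
        rw [Finset.sum_range_succ' g (j+1)]
        simp only [hg, if_neg (Nat.succ_ne_zero _), if_pos rfl, Nat.add_sub_cancel, add_zero]
        apply Finset.sum_congr rfl
        intro i hi
        congr 2
        omega
      have hhs : ∑ i ∈ range (j+2), h i
          = ∑ i ∈ range (j+1), (-1:ℝ)^(j+1-i) * (j.choose i : ℝ) * u (k+i) := by
        rw [Finset.sum_range_succ]
        simp only [hh, if_pos rfl, add_zero]
        apply Finset.sum_congr rfl
        intro i hi
        simp only [Finset.mem_range] at hi
        rw [if_neg (by omega)]
      have key : ∑ i ∈ range (j+2), (-1:ℝ)^(j+1-i) * ((j+1).choose i : ℝ) * u (k+i)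
          = ∑ i ∈ range (j+2), (g i + h i) := by
        apply Finset.sum_congr rfl
        intro i hi
        simp only [Finset.mem_range] at hi
        rcases Nat.eq_zero_or_pos i with h0 | hpos
        · subst h0
          simp [hg, hh]
        · rcases Nat.lt_or_ge i (j+1) with hlt | hge
          · simp only [hg, hh, if_neg (by omega : ¬ i = 0), if_neg (by omega : ¬ i = j+1)]
            obtain ⟨i', rfl⟩ : ∃ i', i = i' + 1 := ⟨i-1, by omega⟩
            rw [Nat.choose_succ_succ]
            push_cast
            simp only [Nat.succ_eq_add_one, Nat.add_sub_cancel]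
            ring
          · have : i = j+1 := by omega
            subst this
            simp only [hg, hh, if_neg (by omega : ¬ j+1 = 0), if_pos rfl, add_zero]
            have e1 : j + 1 - (j+1) = 0 := by omega
            have e2 : (j+1) - 1 = j := by omega
            rw [e1, e2, Nat.sub_self, Nat.choose_self, Nat.choose_self]
      rw [key, Finset.sum_add_distrib, hgs, hhs, ← Finset.sum_add_distrib]
      apply Finset.sum_congr rfl
      intro i hi
      simp only [Finset.mem_range] at hi
      have e : j + 1 - i = (j - i) + 1 := by omega
      rw [e, pow_succ]
      ring

lemma neg_one_pow_mul (j i : ℕ) (hi : i ≤ j) : (-1:ℝ)^j * (-1:ℝ)^(j-i) = (-1:ℝ)^i := by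
  have h1 : (-1:ℝ)^(j-i) * (-1:ℝ)^i = (-1:ℝ)^j := by
    rw [← pow_add]
    congr 1
    omega
  have h2 : ((-1:ℝ)^(j-i))^2 = 1 := by
    rw [← pow_mul, mul_comm, pow_mul]
    norm_num
  calc (-1:ℝ)^j * (-1:ℝ)^(j-i) = ((-1:ℝ)^(j-i) * (-1:ℝ)^i) * (-1:ℝ)^(j-i) := by rw [h1]
    _ = ((-1:ℝ)^(j-i))^2 * (-1:ℝ)^i := by ring
    _ = (-1:ℝ)^i := by rw [h2, one_mul]

/-- signed form of `Dn_eval` -/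
lemma Dn_eval' (j : ℕ) (u : ℕ → ℝ) (k : ℕ) :
    (-1:ℝ)^j * Dn j u k = ∑ i ∈ range (j+1), (-1:ℝ)^i * (j.choose i : ℝ) * u (k+i) := by
  rw [Dn_eval, Finset.mul_sum]
  apply Finset.sum_congr rfl
  intro i hi
  simp only [Finset.mem_range] at hi
  rw [← mul_assoc, ← mul_assoc, neg_one_pow_mul j i (by omega)]

lemma binom_sum (y : ℝ) (m : ℕ) :
    ∑ j ∈ range (m+1), (-1:ℝ)^j * (m.choose j : ℝ) * y^j = (1-y)^m := by
  have : (1 - y)^m = (-y + 1)^m := by ring_nf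
  rw [this, add_pow]
  apply Finset.sum_congr rfl
  intro j hj
  rw [neg_pow]
  ring

/-- the elementary exponential integral -/
lemma exp_int (ψ : ℝ) (hψ : 0 < ψ) (s : ℝ) :
    ∫ u in (0:ℝ)..s, Real.exp (-ψ*u) = (1 - Real.exp (-ψ*s))/ψ := by
  have hd : ∀ u : ℝ, HasDerivAt (fun u => Real.exp (-ψ*u)/(-ψ)) (Real.exp (-ψ*u)) u := by
    intro u
    have h1 : HasDerivAt (fun u : ℝ => -ψ*u) (-ψ) u := by
      simpa using (hasDerivAt_id u).const_mul (-ψ)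
    have h2 := h1.exp
    have h3 := h2.div_const (-ψ)
    refine h3.congr_deriv ?_
    field_simp
  rw [intervalIntegral.integral_eq_sub_of_hasDerivAt (fun u _ => hd u)
    ((Real.continuous_exp.comp (continuous_const.mul continuous_id)).intervalIntegrable 0 s)]
  simp only [mul_zero, Real.exp_zero]
  ring

open MeasureTheory Set Filter intervalIntegral Real

lemma min_nonneg' {s : ℝ} (hs : 0 < s) : 0 ≤ min s 1 := le_min hs.le zero_le_one

lemma min_integrable {ν : Measure ℝ}
    (hνint : ∫⁻ s in Set.Ioi (0:ℝ), ENNReal.ofReal (min s 1) ∂ν < ⊤) :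
    IntegrableOn (fun s => min s 1) (Set.Ioi 0) ν := by
  constructor
  · exact (continuous_id.min continuous_const).aestronglyMeasurable
  · rw [MeasureTheory.hasFiniteIntegral_iff_norm]
    calc ∫⁻ s, ENNReal.ofReal ‖min s 1‖ ∂(ν.restrict (Set.Ioi 0))
        = ∫⁻ s in Set.Ioi (0:ℝ), ENNReal.ofReal (min s 1) ∂ν := by
          apply MeasureTheory.setLIntegral_congr_fun measurableSet_Ioi
          intro s hs
          dsimp only
          rw [Real.norm_eq_abs, abs_of_nonneg (min_nonneg' hs)]
      _ < ⊤ := hνint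

lemma dom_integrable {ν : Measure ℝ}
    (hνint : ∫⁻ s in Set.Ioi (0:ℝ), ENNReal.ofReal (min s 1) ∂ν < ⊤)
    {g : ℝ → ℝ} (hgc : Continuous g) (C : ℝ)
    (hbd : ∀ s ∈ Set.Ioi (0:ℝ), |g s| ≤ C * min s 1) :
    IntegrableOn g (Set.Ioi 0) ν := by
  apply Integrable.mono' ((min_integrable hνint).const_mul C) hgc.aestronglyMeasurable
  rw [MeasureTheory.ae_restrict_iff' measurableSet_Ioi]
  filter_upwards with s hs
  rw [Real.norm_eq_abs]
  exact hbd s hs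

lemma one_sub_exp_le {y : ℝ} (hy : 0 ≤ y) : 1 - Real.exp (-y) ≤ min y 1 := by
  apply le_min
  · have := Real.add_one_le_exp (-y)
    linarith
  · have := Real.exp_nonneg (-y)
    linarith

lemma one_sub_exp_nonneg {y : ℝ} (hy : 0 ≤ y) : 0 ≤ 1 - Real.exp (-y) := by
  have : Real.exp (-y) ≤ Real.exp 0 := Real.exp_le_exp.2 (by linarith)
  simpa using this

lemma min_mul_le {x s : ℝ} (hx : 0 < x) (hs : 0 < s) :
    min (x*s) 1 ≤ max x 1 * min s 1 := by
  rcases le_total s 1 with h | h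
  · rw [min_eq_left h]
    calc min (x*s) 1 ≤ x*s := min_le_left _ _
      _ ≤ max x 1 * s := by
          apply mul_le_mul_of_nonneg_right (le_max_left _ _) hs.le
  · rw [min_eq_right h]
    calc min (x*s) 1 ≤ 1 := min_le_right _ _
      _ ≤ max x 1 := le_max_right _ _
      _ = max x 1 * 1 := (mul_one _).symm

lemma bd1 {x : ℝ} (hx : 0 < x) : ∀ s ∈ Set.Ioi (0:ℝ),
    |1 - Real.exp (-x*s)| ≤ max x 1 * min s 1 := by
  intro s hs
  simp only [Set.mem_Ioi] at hs
  have h0 : 0 ≤ x * s := by positivity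
  rw [abs_of_nonneg (by rw [neg_mul]; exact one_sub_exp_nonneg h0)]
  calc 1 - Real.exp (-x*s) ≤ min (x*s) 1 := by rw [neg_mul]; exact one_sub_exp_le h0
    _ ≤ max x 1 * min s 1 := min_mul_le hx hs

lemma integrable1 {ν : Measure ℝ}
    (hνint : ∫⁻ s in Set.Ioi (0:ℝ), ENNReal.ofReal (min s 1) ∂ν < ⊤)
    {x : ℝ} (hx : 0 < x) :
    IntegrableOn (fun s => 1 - Real.exp (-x*s)) (Set.Ioi 0) ν :=
  dom_integrable hνint (by continuity) (max x 1) (bd1 hx)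

lemma bd2 {x : ℝ} (hx : 0 < x) (m : ℕ) : ∀ s ∈ Set.Ioi (0:ℝ),
    |Real.exp (-x*s) * (1 - Real.exp (-s))^m * (1 - Real.exp (-s))| ≤ 1 * min s 1 := by
  intro s hs
  simp only [Set.mem_Ioi] at hs
  have h1 : 0 ≤ 1 - Real.exp (-s) := one_sub_exp_nonneg hs.le
  have h2 : 1 - Real.exp (-s) ≤ 1 := by
    have := Real.exp_nonneg (-s); linarith
  have h3 : Real.exp (-x*s) ≤ 1 := by
    rw [← Real.exp_zero]
    apply Real.exp_le_exp.2
    nlinarith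
  have h4 : (1 - Real.exp (-s))^m ≤ 1 := pow_le_one₀ h1 h2
  rw [abs_of_nonneg (by positivity), one_mul]
  calc Real.exp (-x*s) * (1 - Real.exp (-s))^m * (1 - Real.exp (-s))
      ≤ 1 * 1 * (1 - Real.exp (-s)) := by
        apply mul_le_mul_of_nonneg_right _ h1
        calc Real.exp (-x*s) * (1 - Real.exp (-s))^m ≤ 1 * 1 := by
              apply mul_le_mul h3 h4 (by positivity) zero_le_one
          _ = 1 * 1 := rfl
    _ = 1 - Real.exp (-s) := by ring
    _ ≤ min s 1 := by
        have := one_sub_exp_le hs.le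
        exact this
  
lemma integrable2 {ν : Measure ℝ}
    (hνint : ∫⁻ s in Set.Ioi (0:ℝ), ENNReal.ofReal (min s 1) ∂ν < ⊤)
    {x : ℝ} (hx : 0 < x) (m : ℕ) :
    IntegrableOn (fun s => Real.exp (-x*s) * (1 - Real.exp (-s))^m * (1 - Real.exp (-s)))
      (Set.Ioi 0) ν :=
  dom_integrable hνint (by continuity) 1 (bd2 hx m)

/-- pointwise binomial exp sum -/
lemma sumexp (x : ℝ) (m : ℕ) (u : ℝ) :
    ∑ j ∈ range (m+1), (-1:ℝ)^j * (m.choose j : ℝ) * Real.exp (-(x+j)*u)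
      = Real.exp (-x*u) * (1 - Real.exp (-u))^m := by
  have expand : ∀ j ∈ range (m+1),
      (-1:ℝ)^j * (m.choose j : ℝ) * Real.exp (-(x+j)*u)
        = Real.exp (-x*u) * ((-1:ℝ)^j * (m.choose j : ℝ) * (Real.exp (-u))^j) := by
    intro j hj
    have h1 : -(x+j)*u = -x*u + (j:ℝ)*(-u) := by ring
    rw [h1, Real.exp_add]
    rw [show Real.exp ((j:ℝ)*(-u)) = Real.exp (-u) ^ j by rw [← Real.exp_nat_mul]]
    ring
  rw [Finset.sum_congr rfl expand, ← Finset.mul_sum, binom_sum]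

/-- finite-difference kernel identity -/
lemma kint (x : ℝ) (hx : 0 < x) (m : ℕ) (s : ℝ) :
    ∑ j ∈ range (m+1), (-1:ℝ)^j * (m.choose j : ℝ) * ((1 - Real.exp (-(x+j)*s))/(x+j))
      = ∫ u in (0:ℝ)..s, Real.exp (-x*u) * (1 - Real.exp (-u))^m := by
  have step : ∀ j ∈ range (m+1),
      (-1:ℝ)^j * (m.choose j : ℝ) * ((1 - Real.exp (-(x+j)*s))/(x+j))
        = ∫ u in (0:ℝ)..s, (-1:ℝ)^j * (m.choose j : ℝ) * Real.exp (-(x+j)*u) := by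
    intro j hj
    rw [intervalIntegral.integral_const_mul, exp_int (x+j) (by positivity) s]
  rw [Finset.sum_congr rfl step, ← intervalIntegral.integral_finset_sum]
  · apply intervalIntegral.integral_congr
    intro u hu
    exact sumexp x m u
  · intro j hj
    apply Continuous.intervalIntegrable
    continuity

lemma kpos (x : ℝ) (hx : 0 < x) (m : ℕ) {s : ℝ} (hs : 0 ≤ s) :
    0 ≤ ∫ u in (0:ℝ)..s, Real.exp (-x*u) * (1 - Real.exp (-u))^m := by
  apply intervalIntegral.integral_nonneg hs
  intro u hu
  have hu0 : 0 ≤ u := hu.1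
  have h1 : 0 ≤ 1 - Real.exp (-u) := one_sub_exp_nonneg hu0
  positivity

section F
variable {f : ℝ → ℝ} {a : ℝ} {ν : Measure ℝ}

/-- L5 : complete monotonicity of differences of f -/
lemma f_diff_cm
    (hνint : ∫⁻ s in Set.Ioi (0:ℝ), ENNReal.ofReal (min s 1) ∂ν < ⊤)
    (hf : ∀ φ > (0:ℝ), f φ = a + ∫ s in Set.Ioi (0:ℝ), (1 - Real.exp (-φ * s)) ∂ν)
    {x : ℝ} (hx : 0 < x) (m : ℕ) :
    0 ≤ ∑ j ∈ range (m+1), (-1:ℝ)^j * (m.choose j : ℝ) * (f (x+j+1) - f (x+j)) := by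
  have diff : ∀ j ∈ range (m+1), (-1:ℝ)^j * (m.choose j : ℝ) * (f (x+j+1) - f (x+j))
      = ∫ s in Set.Ioi (0:ℝ),
          (-1:ℝ)^j * (m.choose j : ℝ) * (Real.exp (-(x+j)*s) * (1 - Real.exp (-s))) ∂ν := by
    intro j hj
    have h1 : (0:ℝ) < x + j := by positivity
    have h2 : (0:ℝ) < x + j + 1 := by positivity
    rw [hf _ h2, hf _ h1]
    have e : a + (∫ s in Set.Ioi (0:ℝ), (1 - Real.exp (-(x+↑j+1) * s)) ∂ν)
        - (a + ∫ s in Set.Ioi (0:ℝ), (1 - Real.exp (-(x+↑j) * s)) ∂ν)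
        = (∫ s in Set.Ioi (0:ℝ), (1 - Real.exp (-(x+↑j+1) * s)) ∂ν)
          - ∫ s in Set.Ioi (0:ℝ), (1 - Real.exp (-(x+↑j) * s)) ∂ν := by ring
    rw [e, ← MeasureTheory.integral_sub (integrable1 hνint h2) (integrable1 hνint h1),
      ← MeasureTheory.integral_const_mul]
    apply MeasureTheory.setIntegral_congr_fun measurableSet_Ioi
    intro s hs
    have e2 : -(x+↑j+1)*s = -(x+↑j)*s + (-s) := by ring
    simp only [e2, Real.exp_add]
    ring
  rw [Finset.sum_congr rfl diff, ← MeasureTheory.integral_finset_sum]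
  · apply MeasureTheory.setIntegral_nonneg measurableSet_Ioi
    intro s hs
    simp only [Set.mem_Ioi] at hs
    have expand : ∀ j ∈ range (m+1),
        (-1:ℝ)^j * (m.choose j : ℝ) * (Real.exp (-(x+j)*s) * (1 - Real.exp (-s)))
          = ((-1:ℝ)^j * (m.choose j : ℝ) * Real.exp (-(x+j)*s)) * (1 - Real.exp (-s)) := by
      intro j hj; ring
    rw [Finset.sum_congr rfl expand, ← Finset.sum_mul, sumexp]
    have h1 : 0 ≤ 1 - Real.exp (-s) := one_sub_exp_nonneg hs.le
    positivity
  · intro j hj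
    have h1 : (0:ℝ) < x + j := by positivity
    have : (fun s => (-1:ℝ)^j * (m.choose j : ℝ) * (Real.exp (-(x+j)*s) * (1 - Real.exp (-s))))
        = fun s => ((-1:ℝ)^j * (m.choose j : ℝ)) * (Real.exp (-(x+j)*s) * (1 - Real.exp (-s))) := by
      funext s; ring
    rw [this]
    apply Integrable.const_mul
    have := integrable2 hνint h1 0
    simpa [IntegrableOn] using this

/-- L6 : complete monotonicity of f(x)/x -/
lemma f_div_cm (ha : 0 ≤ a)
    (hνint : ∫⁻ s in Set.Ioi (0:ℝ), ENNReal.ofReal (min s 1) ∂ν < ⊤)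
    (hf : ∀ φ > (0:ℝ), f φ = a + ∫ s in Set.Ioi (0:ℝ), (1 - Real.exp (-φ * s)) ∂ν)
    {x : ℝ} (hx : 0 < x) (m : ℕ) :
    0 ≤ ∑ j ∈ range (m+1), (-1:ℝ)^j * (m.choose j : ℝ) * (f (x+j) / (x+j)) := by
  have hint3 : ∀ (ψ : ℝ), 0 < ψ → IntegrableOn (fun s => (1 - Real.exp (-ψ*s))/ψ) (Set.Ioi 0) ν := by
    intro ψ hψ
    have : (fun s => (1 - Real.exp (-ψ*s))/ψ) = fun s => (1/ψ) * (1 - Real.exp (-ψ*s)) := by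
      funext s; ring
    rw [this]
    exact (integrable1 hνint hψ).const_mul _
  have term : ∀ j ∈ range (m+1),
      (-1:ℝ)^j * (m.choose j : ℝ) * (f (x+j) / (x+j))
        = ((-1:ℝ)^j * (m.choose j : ℝ) * (a/(x+j)))
          + ∫ s in Set.Ioi (0:ℝ),
              (-1:ℝ)^j * (m.choose j : ℝ) * ((1 - Real.exp (-(x+j)*s))/(x+j)) ∂ν := by
    intro j hj
    have h1 : (0:ℝ) < x + j := by positivity
    rw [hf _ h1, MeasureTheory.integral_const_mul]
    rw [add_div]
    rw [MeasureTheory.integral_div]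
    ring
  rw [Finset.sum_congr rfl term, Finset.sum_add_distrib]
  have apart : 0 ≤ ∑ j ∈ range (m+1), (-1:ℝ)^j * (m.choose j : ℝ) * (a/(x+j)) := by
    have expand : ∀ j ∈ range (m+1), (-1:ℝ)^j * (m.choose j : ℝ) * (a/(x+j))
        = a * ((-1:ℝ)^j * (m.choose j : ℝ) * (1/(x+j))) := by
      intro j hj; ring
    rw [Finset.sum_congr rfl expand, ← Finset.mul_sum]
    apply mul_nonneg ha
    -- limit of the kernel integrals
    have htend : Tendsto (fun n : ℕ =>
        ∑ j ∈ range (m+1), (-1:ℝ)^j * (m.choose j : ℝ) * ((1 - Real.exp (-(x+j)*n))/(x+j)))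
        atTop (nhds (∑ j ∈ range (m+1), (-1:ℝ)^j * (m.choose j : ℝ) * (1/(x+j)))) := by
      apply tendsto_finset_sum
      intro j hj
      have h1 : (0:ℝ) < x + j := by positivity
      apply Tendsto.const_mul
      apply Tendsto.div_const
      have hbase : Real.exp (-(x+j)) < 1 := by
        rw [← Real.exp_zero]
        apply Real.exp_lt_exp.2
        linarith
      have hpow : Tendsto (fun n : ℕ => Real.exp (-(x+j)) ^ n) atTop (nhds 0) :=
        tendsto_pow_atTop_nhds_zero_of_lt_one (Real.exp_nonneg _) hbase
      have heq : ∀ n : ℕ, Real.exp (-(x+j)*n) = Real.exp (-(x+j)) ^ n := by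
        intro n
        rw [← Real.exp_nat_mul]
        congr 1
        ring
      have : Tendsto (fun n : ℕ => Real.exp (-(x+j)*n)) atTop (nhds 0) := by
        simpa only [heq] using hpow
      have := this.const_sub 1
      simpa using this
    apply ge_of_tendsto htend
    filter_upwards with n
    rw [kint x hx m n]
    exact kpos x hx m (Nat.cast_nonneg n)
  have nupart : 0 ≤ ∑ j ∈ range (m+1), ∫ s in Set.Ioi (0:ℝ),
      (-1:ℝ)^j * (m.choose j : ℝ) * ((1 - Real.exp (-(x+j)*s))/(x+j)) ∂ν := by
    rw [← MeasureTheory.integral_finset_sum]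
    · apply MeasureTheory.setIntegral_nonneg measurableSet_Ioi
      intro s hs
      simp only [Set.mem_Ioi] at hs
      rw [kint x hx m s]
      exact kpos x hx m hs.le
    · intro j hj
      have h1 : (0:ℝ) < x + j := by positivity
      exact (hint3 _ h1).const_mul _
  linarith

lemma f_nonneg (ha : 0 ≤ a)
    (hf : ∀ φ > (0:ℝ), f φ = a + ∫ s in Set.Ioi (0:ℝ), (1 - Real.exp (-φ * s)) ∂ν)
    {φ : ℝ} (hφ : 0 < φ) : 0 ≤ f φ := by
  rw [hf _ hφ]
  apply add_nonneg ha
  apply MeasureTheory.setIntegral_nonneg measurableSet_Ioi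
  intro s hs
  simp only [Set.mem_Ioi] at hs
  rw [neg_mul]
  exact one_sub_exp_nonneg (by positivity)

lemma f_pos (ha : 0 ≤ a)
    (hνint : ∫⁻ s in Set.Ioi (0:ℝ), ENNReal.ofReal (min s 1) ∂ν < ⊤)
    (hνinf : ν (Set.Ioi (0:ℝ)) = ⊤)
    (hf : ∀ φ > (0:ℝ), f φ = a + ∫ s in Set.Ioi (0:ℝ), (1 - Real.exp (-φ * s)) ∂ν)
    {φ : ℝ} (hφ : 0 < φ) : 0 < f φ := by
  rw [hf _ hφ]
  have hpos : 0 < ∫ s in Set.Ioi (0:ℝ), (1 - Real.exp (-φ * s)) ∂ν := by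
    rw [MeasureTheory.setIntegral_pos_iff_support_of_nonneg_ae]
    · have hsub : Set.Ioi (0:ℝ) ⊆ Function.support (fun s => 1 - Real.exp (-φ * s)) ∩ Set.Ioi 0 := by
        intro s hs
        simp only [Set.mem_Ioi] at hs
        refine ⟨?_, hs⟩
        simp only [Function.mem_support]
        have : Real.exp (-φ * s) < 1 := by
          rw [← Real.exp_zero]
          apply Real.exp_lt_exp.2
          nlinarith
        intro hcon
        nlinarith [this]
      calc (0:ENNReal) < ⊤ := by simp
        _ = ν (Set.Ioi (0:ℝ)) := hνinf.symm
        _ ≤ ν (Function.support (fun s => 1 - Real.exp (-φ * s)) ∩ Set.Ioi 0) := measure_mono hsub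
    · filter_upwards [MeasureTheory.ae_restrict_mem measurableSet_Ioi] with s hs
      simp only [Set.mem_Ioi] at hs
      show (0:ℝ) ≤ 1 - Real.exp (-φ * s)
      rw [neg_mul]
      exact one_sub_exp_nonneg (by positivity)
    · exact integrable1 hνint hφ
  linarith

lemma fsub_pos (ha : 0 ≤ a) {lam : ℝ} (hlam : lam < 0)
    (hf : ∀ φ > (0:ℝ), f φ = a + ∫ s in Set.Ioi (0:ℝ), (1 - Real.exp (-φ * s)) ∂ν)
    {φ : ℝ} (hφ : 0 < φ) : 0 < f φ - lam := by
  have := f_nonneg ha hf hφ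
  linarith

/-- the key CM positivity for the Laplace-transform values -/
lemma Lfun_cm (ha : 0 ≤ a)
    (hνint : ∫⁻ s in Set.Ioi (0:ℝ), ENNReal.ofReal (min s 1) ∂ν < ⊤)
    (hf : ∀ φ > (0:ℝ), f φ = a + ∫ s in Set.Ioi (0:ℝ), (1 - Real.exp (-φ * s)) ∂ν)
    {lam : ℝ} (hlam : lam < 0)
    {φ : ℝ} (hφ : 0 < φ) (m : ℕ) :
    0 ≤ ∑ j ∈ range (m+1), (-1:ℝ)^j * (m.choose j : ℝ)
        * ((f (φ+j) / (φ+j)) * (1 / (f (φ+j) - lam))) := by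
  set Gseq : ℕ → ℝ := fun k => f (φ+k) / (φ+k) with hG
  set bseq : ℕ → ℝ := fun k => f (φ+k) - lam with hb
  have hGcm : ∀ m', CMle m' Gseq := by
    intro m' j hj k
    rw [Dn_eval']
    have key := f_div_cm ha hνint hf (x := φ + k) (by positivity) j
    convert key using 1
    apply Finset.sum_congr rfl
    intro i hi
    simp only [hG]
    have e : φ + (↑(k + i) : ℝ) = φ + ↑k + ↑i := by push_cast; ring
    rw [e]
  have hbpos : ∀ k, 0 < bseq k := by
    intro k
    exact fsub_pos ha hlam hf (by positivity)
  have hdcm : ∀ m', CMle m' (D bseq) := by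
    intro m' j hj k
    rw [Dn_eval']
    have key := f_diff_cm hνint hf (x := φ + k) (by positivity) j
    convert key using 1
    apply Finset.sum_congr rfl
    intro i hi
    simp only [D, hb]
    have e1 : φ + (↑(k + i + 1) : ℝ) = φ + ↑k + ↑i + 1 := by push_cast; ring
    have e2 : φ + (↑(k + i) : ℝ) = φ + ↑k + ↑i := by push_cast; ring
    rw [e1, e2]
    ring
  have hHcm : ∀ m', CMle m' (fun k => 1 / bseq k) := fun m' => CMle.inv m' bseq hbpos hdcm
  have hprod : CMle m (fun k => Gseq k * (1 / bseq k)) := CMle.mul (hGcm m) (hHcm m)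
  have := hprod m le_rfl 0
  rw [Dn_eval'] at this
  convert this using 1
  apply Finset.sum_congr rfl
  intro i hi
  simp [hG, hb]

/-- integrability of the Laplace integrand of q -/
lemma laplace_integrable (ha : 0 ≤ a)
    (hνint : ∫⁻ s in Set.Ioi (0:ℝ), ENNReal.ofReal (min s 1) ∂ν < ⊤)
    (hνinf : ν (Set.Ioi (0:ℝ)) = ⊤)
    (hf : ∀ φ > (0:ℝ), f φ = a + ∫ s in Set.Ioi (0:ℝ), (1 - Real.exp (-φ * s)) ∂ν)
    {lam : ℝ} (hlam : lam < 0) {q : ℝ → ℝ}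
    (hqLT : ∀ φ > (0:ℝ),
      ∫ t in Set.Ioi (0:ℝ), Real.exp (-φ * t) * q t = (f φ / φ) * (1 / (f φ - lam)))
    {φ : ℝ} (hφ : 0 < φ) :
    IntegrableOn (fun t => Real.exp (-φ * t) * q t) (Set.Ioi 0) (volume : Measure ℝ) := by
  by_contra hcon
  have h0 : ∫ t in Set.Ioi (0:ℝ), Real.exp (-φ * t) * q t = 0 :=
    MeasureTheory.integral_undef hcon
  rw [hqLT _ hφ] at h0
  have h1 : 0 < f φ := f_pos ha hνint hνinf hf hφ
  have h2 : 0 < f φ - lam := fsub_pos ha hlam hf hφ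
  have : 0 < (f φ / φ) * (1 / (f φ - lam)) := by positivity
  linarith

/-- moment positivity for q -/
lemma q_moments (ha : 0 ≤ a)
    (hνint : ∫⁻ s in Set.Ioi (0:ℝ), ENNReal.ofReal (min s 1) ∂ν < ⊤)
    (hνinf : ν (Set.Ioi (0:ℝ)) = ⊤)
    (hf : ∀ φ > (0:ℝ), f φ = a + ∫ s in Set.Ioi (0:ℝ), (1 - Real.exp (-φ * s)) ∂ν)
    {lam : ℝ} (hlam : lam < 0) {q : ℝ → ℝ} (hqm : Continuous q)
    (hqLT : ∀ φ > (0:ℝ),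
      ∫ t in Set.Ioi (0:ℝ), Real.exp (-φ * t) * q t = (f φ / φ) * (1 / (f φ - lam)))
    {φ : ℝ} (hφ : 0 < φ) (m : ℕ) :
    0 ≤ ∫ t in Set.Ioi (0:ℝ), Real.exp (-φ * t) * (1 - Real.exp (-t))^m * q t := by
  have key := Lfun_cm ha hνint hf hlam hφ m
  have step : ∀ j ∈ range (m+1),
      (-1:ℝ)^j * (m.choose j : ℝ) * ((f (φ+j) / (φ+j)) * (1 / (f (φ+j) - lam)))
        = ∫ t in Set.Ioi (0:ℝ),
            (-1:ℝ)^j * (m.choose j : ℝ) * (Real.exp (-(φ+j) * t) * q t) := by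
    intro j hj
    rw [← hqLT _ (by positivity : (0:ℝ) < φ + j), MeasureTheory.integral_const_mul]
  rw [Finset.sum_congr rfl step, ← MeasureTheory.integral_finset_sum] at key
  · calc (0:ℝ) ≤ ∫ t in Set.Ioi (0:ℝ), ∑ j ∈ range (m+1),
          (-1:ℝ)^j * (m.choose j : ℝ) * (Real.exp (-(φ+j) * t) * q t) := key
      _ = ∫ t in Set.Ioi (0:ℝ), Real.exp (-φ * t) * (1 - Real.exp (-t))^m * q t := by
          apply MeasureTheory.setIntegral_congr_fun measurableSet_Ioi
          intro t ht
          show ∑ j ∈ range (m+1), (-1:ℝ)^j * (m.choose j : ℝ) * (Real.exp (-(φ+j) * t) * q t) = _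
          have expand : ∀ j ∈ range (m+1),
              (-1:ℝ)^j * (m.choose j : ℝ) * (Real.exp (-(φ+j) * t) * q t)
                = ((-1:ℝ)^j * (m.choose j : ℝ) * Real.exp (-(φ+j) * t)) * q t := by
            intro j hj; ring
          rw [Finset.sum_congr rfl expand, ← Finset.sum_mul, sumexp]
  · intro j hj
    apply Integrable.const_mul
    exact laplace_integrable ha hνint hνinf hf hlam hqLT (by positivity : (0:ℝ) < φ + j)

end F

/-- concentration-of-Bernstein-kernels argument: the generalized moments force q ≥ 0 -/
lemma q_nonneg_of_moments {q : ℝ → ℝ} (hqcont : Continuous q) {C c : ℝ}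
    (hq : ∀ t ≥ (0:ℝ), |q t| ≤ C * Real.exp (c * t))
    (hpos : ∀ φ > (0:ℝ), ∀ m : ℕ,
      0 ≤ ∫ t in Set.Ioi (0:ℝ), Real.exp (-φ*t) * (1-Real.exp (-t))^m * q t) :
    ∀ t ≥ (0:ℝ), 0 ≤ q t := by
  by_contra hcon
  push_neg at hcon
  obtain ⟨t0, ht0, hq0⟩ := hcon
  -- find a strictly positive point where q is negative
  obtain ⟨t1, ht1, hqt1⟩ : ∃ t1 : ℝ, 0 < t1 ∧ q t1 < 0 := by
    rcases lt_or_eq_of_le ht0 with h | h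
    · exact ⟨t0, h, hq0⟩
    · -- t0 = 0
      obtain rfl : t0 = 0 := h.symm
      have hU : IsOpen (q ⁻¹' (Set.Iio (q 0 / 2))) := (isOpen_Iio).preimage hqcont
      have ht0U : (0:ℝ) ∈ q ⁻¹' (Set.Iio (q 0 / 2)) := by
        simp only [Set.mem_preimage, Set.mem_Iio]
        linarith
      obtain ⟨r, hr, hball⟩ := Metric.isOpen_iff.1 hU 0 ht0U
      refine ⟨r/2, by linarith, ?_⟩
      have hd : dist (r/2) (0:ℝ) < r := by
        rw [Real.dist_eq, sub_zero, abs_of_nonneg (by linarith)]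
        linarith
      have := hball (Metric.mem_ball.mpr hd)
      simp only [Set.mem_preimage, Set.mem_Iio] at this
      linarith
  set α : ℝ := Real.exp (-t1) / (1 - Real.exp (-t1)) with hαdef
  have hden : 0 < 1 - Real.exp (-t1) := by
    have : Real.exp (-t1) < 1 := by
      rw [← Real.exp_zero]; exact Real.exp_lt_exp.2 (by linarith)
    linarith
  have hα : 0 < α := div_pos (Real.exp_pos _) hden
  have hαeq : α * (1 - Real.exp (-t1)) = Real.exp (-t1) := by
    rw [hαdef]
    exact div_mul_cancel₀ _ (ne_of_gt hden)
  set g : ℝ → ℝ := fun t => Real.exp (-α*t) * (1 - Real.exp (-t)) with hgdef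
  have hgcont : Continuous g := by
    apply Continuous.mul
    · exact Real.continuous_exp.comp (continuous_const.mul continuous_id)
    · exact continuous_const.sub (Real.continuous_exp.comp continuous_neg)
  have hgderiv : ∀ t : ℝ, HasDerivAt g (Real.exp (-α*t) * ((1+α)*Real.exp (-t) - α)) t := by
    intro t
    have h1 : HasDerivAt (fun t : ℝ => -α*t) (-α) t := by
      simpa using (hasDerivAt_id t).const_mul (-α)
    have h2 := h1.exp
    have h3 : HasDerivAt (fun t : ℝ => 1 - Real.exp (-t)) (Real.exp (-t)) t := by
      have hn : HasDerivAt (fun t : ℝ => -t) (-1) t := by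
        exact hasDerivAt_neg t
      have := (hn.exp).const_sub 1
      simpa using this
    have := h2.mul h3
    refine this.congr_deriv ?_
    ring
  have hgpos : ∀ t : ℝ, 0 < t → 0 < g t := by
    intro t ht
    have h1 : Real.exp (-t) < 1 := by
      rw [← Real.exp_zero]; exact Real.exp_lt_exp.2 (by linarith)
    have h2 : (0:ℝ) < 1 - Real.exp (-t) := by linarith
    have := Real.exp_pos (-α*t)
    positivity
  have hmono : StrictMonoOn g (Set.Icc 0 t1) := by
    apply strictMonoOn_of_deriv_pos (convex_Icc 0 t1) hgcont.continuousOn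
    intro t ht
    rw [interior_Icc] at ht
    rw [(hgderiv t).deriv]
    have h1 : Real.exp (-t1) < Real.exp (-t) := Real.exp_lt_exp.2 (by linarith [ht.2])
    have key : (0:ℝ) < (1+α)*Real.exp (-t) - α := by nlinarith [hαeq]
    have := Real.exp_pos (-α*t)
    positivity
  have hanti : StrictAntiOn g (Set.Ici t1) := by
    apply strictAntiOn_of_deriv_neg (convex_Ici t1) hgcont.continuousOn
    intro t ht
    rw [interior_Ici] at ht
    rw [(hgderiv t).deriv]
    have h1 : Real.exp (-t) < Real.exp (-t1) := Real.exp_lt_exp.2 (by simp only [Set.mem_Ioi] at ht; linarith)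
    have key : (1+α)*Real.exp (-t) - α < 0 := by nlinarith [hαeq]
    have h2 := Real.exp_pos (-α*t)
    nlinarith
  -- choose δ
  set ε : ℝ := -(q t1) / 2 with hεdef
  have hε : 0 < ε := by simp only [hεdef]; linarith
  have hUq : IsOpen (q ⁻¹' (Set.Iio (-ε))) := (isOpen_Iio).preimage hqcont
  have ht1U : t1 ∈ q ⁻¹' (Set.Iio (-ε)) := by
    simp only [Set.mem_preimage, Set.mem_Iio, hεdef]
    linarith
  obtain ⟨r1, hr1, hball1⟩ := Metric.isOpen_iff.1 hUq t1 ht1U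
  set δ : ℝ := min (r1/2) (t1/2) with hδdef
  have hδ : 0 < δ := by
    apply lt_min <;> linarith
  have hδt1 : δ < t1 := by
    calc δ ≤ t1/2 := min_le_right _ _
      _ < t1 := by linarith
  have hqneg : ∀ t ∈ Set.Icc (t1-δ) (t1+δ), q t ≤ -ε := by
    intro t ht
    have h1 : δ ≤ r1/2 := min_le_left _ _
    have habs : |t - t1| ≤ δ := abs_le.2 ⟨by linarith [ht.1], by linarith [ht.2]⟩
    have hlt : |t - t1| < r1 := lt_of_le_of_lt habs (by linarith)
    have := hball1 (by simp only [Metric.mem_ball, Real.dist_eq]; exact hlt)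
    simp only [Set.mem_preimage, Set.mem_Iio] at this
    linarith
  -- θ and θ'
  have hIcc1 : t1 - δ ∈ Set.Icc (0:ℝ) t1 := ⟨by linarith, by linarith⟩
  have hIcc2 : t1 ∈ Set.Icc (0:ℝ) t1 := ⟨by linarith, le_rfl⟩
  set θ : ℝ := max (g (t1-δ)) (g (t1+δ)) with hθdef
  have hθ1 : g (t1-δ) < g t1 := hmono hIcc1 hIcc2 (by linarith)
  have hθ2 : g (t1+δ) < g t1 :=
    hanti (Set.mem_Ici.2 le_rfl) (Set.mem_Ici.2 (by linarith)) (by linarith)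
  have hθlt : θ < g t1 := max_lt hθ1 hθ2
  have hθpos : 0 < θ := lt_of_lt_of_le (hgpos _ (by linarith)) (le_max_left _ _)
  set θ' : ℝ := (θ + g t1)/2 with hθ'def
  have hθ'1 : θ < θ' := by rw [hθ'def]; linarith
  have hθ'2 : θ' < g t1 := by rw [hθ'def]; linarith
  have hθ'pos : 0 < θ' := lt_trans hθpos hθ'1
  -- ρ
  have hVopen : IsOpen (g ⁻¹' Set.Ioi θ') := isOpen_Ioi.preimage hgcont
  have ht1V : t1 ∈ g ⁻¹' Set.Ioi θ' := by
    simp only [Set.mem_preimage, Set.mem_Ioi]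
    exact hθ'2
  obtain ⟨r2, hr2, hball2⟩ := Metric.isOpen_iff.1 hVopen t1 ht1V
  set ρ : ℝ := min (r2/2) δ with hρdef
  have hρ : 0 < ρ := lt_min (by linarith) hδ
  have hρδ : ρ ≤ δ := min_le_right _ _
  have hgρ : ∀ t ∈ Set.Icc (t1-ρ) (t1+ρ), θ' ≤ g t := by
    intro t ht
    have habs : |t - t1| ≤ ρ := abs_le.2 ⟨by linarith [ht.1], by linarith [ht.2]⟩
    have hlt2 : |t - t1| < r2 :=
      lt_of_le_of_lt habs (lt_of_le_of_lt (min_le_left _ _) (by linarith))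
    have := hball2 (by simp only [Metric.mem_ball, Real.dist_eq]; exact hlt2)
    simp only [Set.mem_preimage, Set.mem_Ioi] at this
    linarith
  -- bounds on g
  have hgθleft : ∀ t ∈ Set.Ioc (0:ℝ) (t1-δ), g t ≤ θ := by
    intro t ht
    have h1 : g t ≤ g (t1-δ) := by
      rcases eq_or_lt_of_le ht.2 with he | hl
      · rw [he]
      · exact le_of_lt (hmono ⟨le_of_lt ht.1, by linarith⟩ hIcc1 hl)
    exact le_trans h1 (le_max_left _ _)
  have hgθright : ∀ t : ℝ, t1 + δ ≤ t → g t ≤ θ := by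
    intro t htt
    have h1 : g t ≤ g (t1+δ) := by
      rcases eq_or_lt_of_le htt with he | hl
      · rw [← he]
      · exact le_of_lt (hanti (Set.mem_Ici.2 (by linarith)) (Set.mem_Ici.2 (by linarith)) hl)
    exact le_trans h1 (le_max_right _ _)
  have hgbd : ∀ t : ℝ, 0 ≤ t → g t ≤ Real.exp (-α*t) := by
    intro t ht
    have h1 : 1 - Real.exp (-t) ≤ 1 := by
      have := Real.exp_nonneg (-t); linarith
    have h2 : 0 ≤ 1 - Real.exp (-t) := one_sub_exp_nonneg ht
    calc g t = Real.exp (-α*t) * (1 - Real.exp (-t)) := rfl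
      _ ≤ Real.exp (-α*t) * 1 := by
          apply mul_le_mul_of_nonneg_left h1 (Real.exp_nonneg _)
      _ = Real.exp (-α*t) := mul_one _
  have hgnonneg : ∀ t : ℝ, 0 ≤ t → 0 ≤ g t := by
    intro t ht
    have h2 := one_sub_exp_nonneg ht
    have h3 := Real.exp_nonneg (-α*t)
    calc (0:ℝ) ≤ Real.exp (-α*t) * (1 - Real.exp (-t)) := mul_nonneg h3 h2
      _ = g t := rfl
  -- constants
  have hC : 0 ≤ C := by
    have h1 := hq 0 le_rfl
    have h2 := abs_nonneg (q 0)
    rw [mul_zero, Real.exp_zero, mul_one] at h1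
    linarith
  obtain ⟨n₀, hn₀⟩ : ∃ n₀ : ℕ, c - 1 < n₀ * α := by
    obtain ⟨n₀, hn₀⟩ := exists_nat_gt ((c-1)/α)
    exact ⟨n₀, by rwa [div_lt_iff₀ hα] at hn₀⟩
  -- integrability machinery
  have hexpint : ∀ (b : ℝ), 0 < b → ∀ (A : ℝ),
      IntegrableOn (fun t => C * Real.exp (-b*t)) (Set.Ioi A) volume :=
    fun b hb A => (exp_neg_integrableOn_Ioi A hb).const_mul C
  have hEbound : ∀ (n : ℕ), c - 1 < n * α → ∀ t : ℝ, 0 < t →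
      |Real.exp (-t) * g t ^ n * q t| ≤ C * Real.exp (-(n*α + 1 - c)*t) := by
    intro n hn t ht
    have hgn : 0 ≤ g t ^ n := pow_nonneg (hgnonneg t ht.le) n
    have h1 : |Real.exp (-t) * g t ^ n * q t| = Real.exp (-t) * g t ^ n * |q t| := by
      rw [abs_mul, abs_of_nonneg (mul_nonneg (Real.exp_nonneg _) hgn)]
    rw [h1]
    have h2 : g t ^ n ≤ Real.exp (-α*t) ^ n :=
      pow_le_pow_left₀ (hgnonneg t ht.le) (hgbd t ht.le) n
    have h3 : |q t| ≤ C * Real.exp (c*t) := hq t ht.le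
    calc Real.exp (-t) * g t ^ n * |q t|
        ≤ Real.exp (-t) * Real.exp (-α*t) ^ n * (C * Real.exp (c*t)) := by
          apply mul_le_mul
          · exact mul_le_mul_of_nonneg_left h2 (Real.exp_nonneg _)
          · exact h3
          · exact abs_nonneg _
          · positivity
      _ = C * (Real.exp (-t + (n:ℝ)*(-α*t)) * Real.exp (c*t)) := by
          rw [show Real.exp (-α*t)^n = Real.exp ((n:ℝ) * (-α*t)) from (Real.exp_nat_mul _ n).symm,
            ← Real.exp_add]
          ring
      _ = C * Real.exp ((-t + (n:ℝ)*(-α*t)) + c*t) := by rw [← Real.exp_add]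
      _ = C * Real.exp (-(n*α + 1 - c)*t) := by
          congr 1
          ring
  have hmeas : ∀ n : ℕ, AEStronglyMeasurable (fun t => Real.exp (-t) * g t ^ n * q t)
      (volume.restrict (Set.Ioi (0:ℝ))) := by
    intro n
    apply Continuous.aestronglyMeasurable
    exact ((Real.continuous_exp.comp continuous_neg).mul (hgcont.pow n)).mul hqcont
  have hEint : ∀ (n : ℕ), c - 1 < n * α → ∀ A : ℝ, 0 ≤ A →
      IntegrableOn (fun t => Real.exp (-t) * g t ^ n * q t) (Set.Ioi A) volume := by
    intro n hn A hA
    apply Integrable.mono' (hexpint (n*α+1-c) (by linarith) A)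
    · exact Continuous.aestronglyMeasurable
        (((Real.continuous_exp.comp continuous_neg).mul (hgcont.pow n)).mul hqcont)
    · rw [MeasureTheory.ae_restrict_iff' measurableSet_Ioi]
      filter_upwards with t ht
      simp only [Set.mem_Ioi] at ht
      rw [Real.norm_eq_abs]
      exact hEbound n hn t (by linarith)
  -- the two tail constants
  set K1 : ℝ := ∫ t in Set.Ioc (0:ℝ) (t1-δ), Real.exp (-t) * |q t| with hK1def
  have hK1int : IntegrableOn (fun t => Real.exp (-t) * |q t|) (Set.Ioc (0:ℝ) (t1-δ)) volume := by
    apply IntegrableOn.mono_set _ Set.Ioc_subset_Icc_self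
    exact (((Real.continuous_exp.comp continuous_neg).mul hqcont.abs).continuousOn).integrableOn_compact isCompact_Icc
  have hK1nonneg : 0 ≤ K1 := by
    apply MeasureTheory.setIntegral_nonneg measurableSet_Ioc
    intro t ht
    positivity
  set K2 : ℝ := ∫ t in Set.Ioi (t1+δ), Real.exp (-t) * g t ^ n₀ * |q t| with hK2def
  have hK2int : IntegrableOn (fun t => Real.exp (-t) * g t ^ n₀ * |q t|) (Set.Ioi (t1+δ)) volume := by
    apply Integrable.mono' (hexpint (n₀*α+1-c) (by linarith) (t1+δ))
    · exact Continuous.aestronglyMeasurable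
        (((Real.continuous_exp.comp continuous_neg).mul (hgcont.pow n₀)).mul hqcont.abs)
    · rw [MeasureTheory.ae_restrict_iff' measurableSet_Ioi]
      filter_upwards with t ht
      simp only [Set.mem_Ioi] at ht
      have ht0' : 0 < t := by linarith
      have e : ‖Real.exp (-t) * g t ^ n₀ * |q t|‖ = |Real.exp (-t) * g t ^ n₀ * q t| := by
        rw [Real.norm_eq_abs, abs_mul, abs_mul, abs_mul, abs_mul, abs_abs]
      rw [e]
      exact hEbound n₀ hn₀ t ht0'
  have hK2nonneg : 0 ≤ K2 := by
    apply MeasureTheory.setIntegral_nonneg measurableSet_Ioi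
    intro t ht
    simp only [Set.mem_Ioi] at ht
    have := hgnonneg t (by linarith)
    positivity
  -- main estimate
  have main : ∀ n : ℕ, n₀ ≤ n →
      θ'^n * (2*ρ*ε*Real.exp (-(t1+ρ))) ≤ θ^n * K1 + θ^(n-n₀) * K2 := by
    intro n hn
    have hcast : (n₀:ℝ) ≤ (n:ℝ) := Nat.cast_le.2 hn
    have hnα : c - 1 < (n:ℝ) * α :=
      lt_of_lt_of_le hn₀ (mul_le_mul_of_nonneg_right hcast hα.le)
    have hφn : (0:ℝ) < (n:ℝ)*α + 1 := by positivity
    have hpos_n := hpos ((n:ℝ)*α+1) hφn n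
    have hident : ∀ t : ℝ, Real.exp (-((n:ℝ)*α+1)*t) * (1-Real.exp (-t))^n * q t
        = Real.exp (-t) * g t ^ n * q t := by
      intro t
      have e1 : g t ^ n = Real.exp ((n:ℝ)*(-α*t)) * (1-Real.exp (-t))^n := by
        show (Real.exp (-α*t) * (1-Real.exp (-t)))^n = _
        rw [mul_pow, ← Real.exp_nat_mul]
      have e2 : Real.exp (-((n:ℝ)*α+1)*t) = Real.exp (-t) * Real.exp ((n:ℝ)*(-α*t)) := by
        rw [← Real.exp_add]
        congr 1
        ring
      rw [e1, e2]
      ring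
    have h0 : 0 ≤ ∫ t in Set.Ioi (0:ℝ), Real.exp (-t) * g t ^ n * q t := by
      refine le_trans hpos_n (le_of_eq ?_)
      apply MeasureTheory.setIntegral_congr_fun measurableSet_Ioi
      intro t ht
      exact hident t
    have hEnint : IntegrableOn (fun t => Real.exp (-t) * g t ^ n * q t) (Set.Ioi 0) volume :=
      hEint n hnα 0 le_rfl
    -- splitting
    have hsub1 : Set.Ioc (0:ℝ) (t1+δ) ⊆ Set.Ioi 0 := Set.Ioc_subset_Ioi_self
    have hsub2 : Set.Ioi (t1+δ) ⊆ Set.Ioi (0:ℝ) := Set.Ioi_subset_Ioi (by linarith)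
    have hsub3 : Set.Ioc (0:ℝ) (t1-δ) ⊆ Set.Ioi 0 := Set.Ioc_subset_Ioi_self
    have hsub4 : Set.Ioc (t1-δ) (t1+δ) ⊆ Set.Ioi (0:ℝ) := by
      intro t ht
      simp only [Set.mem_Ioi]
      have := ht.1
      linarith
    have hsplit1 : ∫ t in Set.Ioi (0:ℝ), Real.exp (-t) * g t ^ n * q t
        = (∫ t in Set.Ioc (0:ℝ) (t1+δ), Real.exp (-t) * g t ^ n * q t)
          + ∫ t in Set.Ioi (t1+δ), Real.exp (-t) * g t ^ n * q t := by
      rw [← MeasureTheory.setIntegral_union (Set.Ioc_disjoint_Ioi le_rfl) measurableSet_Ioi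
        (hEnint.mono_set hsub1) (hEnint.mono_set hsub2),
        Set.Ioc_union_Ioi_eq_Ioi (by linarith : (0:ℝ) ≤ t1+δ)]
    have hsplit2 : ∫ t in Set.Ioc (0:ℝ) (t1+δ), Real.exp (-t) * g t ^ n * q t
        = (∫ t in Set.Ioc (0:ℝ) (t1-δ), Real.exp (-t) * g t ^ n * q t)
          + ∫ t in Set.Ioc (t1-δ) (t1+δ), Real.exp (-t) * g t ^ n * q t := by
      rw [← MeasureTheory.setIntegral_union (Set.Ioc_disjoint_Ioc_of_le le_rfl) measurableSet_Ioc
        (hEnint.mono_set hsub3) (hEnint.mono_set hsub4),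
        Set.Ioc_union_Ioc_eq_Ioc (by linarith : (0:ℝ) ≤ t1-δ) (by linarith : t1-δ ≤ t1+δ)]
    -- left piece
    have hleft : ∫ t in Set.Ioc (0:ℝ) (t1-δ), Real.exp (-t) * g t ^ n * q t ≤ θ^n * K1 := by
      have hb : ∀ t ∈ Set.Ioc (0:ℝ) (t1-δ),
          Real.exp (-t) * g t ^ n * q t ≤ θ^n * (Real.exp (-t) * |q t|) := by
        intro t ht
        have hg0 : 0 ≤ g t := hgnonneg t ht.1.le
        have h3 : g t ^ n ≤ θ^n := pow_le_pow_left₀ hg0 (hgθleft t ht) n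
        have h4 : q t ≤ |q t| := le_abs_self _
        have h5 : Real.exp (-t) * g t ^ n * q t ≤ Real.exp (-t) * g t ^ n * |q t| :=
          mul_le_mul_of_nonneg_left h4 (by positivity)
        calc Real.exp (-t) * g t ^ n * q t ≤ Real.exp (-t) * g t ^ n * |q t| := h5
          _ = (Real.exp (-t) * |q t|) * g t ^ n := by ring
          _ ≤ (Real.exp (-t) * |q t|) * θ^n := by
              apply mul_le_mul_of_nonneg_left h3 (by positivity)
          _ = θ^n * (Real.exp (-t) * |q t|) := by ring
      calc ∫ t in Set.Ioc (0:ℝ) (t1-δ), Real.exp (-t) * g t ^ n * q t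
          ≤ ∫ t in Set.Ioc (0:ℝ) (t1-δ), θ^n * (Real.exp (-t) * |q t|) :=
            MeasureTheory.setIntegral_mono_on (hEnint.mono_set hsub3)
              (hK1int.const_mul _) measurableSet_Ioc hb
        _ = θ^n * K1 := by rw [MeasureTheory.integral_const_mul]
    -- right piece
    have hright : ∫ t in Set.Ioi (t1+δ), Real.exp (-t) * g t ^ n * q t ≤ θ^(n-n₀) * K2 := by
      have hb : ∀ t ∈ Set.Ioi (t1+δ),
          Real.exp (-t) * g t ^ n * q t ≤ θ^(n-n₀) * (Real.exp (-t) * g t ^ n₀ * |q t|) := by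
        intro t ht
        simp only [Set.mem_Ioi] at ht
        have ht0' : (0:ℝ) < t := by linarith
        have hg0 : 0 ≤ g t := hgnonneg t ht0'.le
        have hpow : g t ^ n = g t ^ n₀ * g t ^ (n-n₀) := by
          rw [← pow_add]
          congr 1
          omega
        have h3 : g t ^ (n-n₀) ≤ θ^(n-n₀) := pow_le_pow_left₀ hg0 (hgθright t (le_of_lt ht)) _
        have h4 : q t ≤ |q t| := le_abs_self _
        calc Real.exp (-t) * g t ^ n * q t ≤ Real.exp (-t) * g t ^ n * |q t| :=
              mul_le_mul_of_nonneg_left h4 (by positivity)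
          _ = (Real.exp (-t) * g t ^ n₀ * |q t|) * g t ^ (n-n₀) := by rw [hpow]; ring
          _ ≤ (Real.exp (-t) * g t ^ n₀ * |q t|) * θ^(n-n₀) := by
              apply mul_le_mul_of_nonneg_left h3
              positivity
          _ = θ^(n-n₀) * (Real.exp (-t) * g t ^ n₀ * |q t|) := by ring
      calc ∫ t in Set.Ioi (t1+δ), Real.exp (-t) * g t ^ n * q t
          ≤ ∫ t in Set.Ioi (t1+δ), θ^(n-n₀) * (Real.exp (-t) * g t ^ n₀ * |q t|) :=
            MeasureTheory.setIntegral_mono_on (hEnint.mono_set hsub2)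
              (hK2int.const_mul _) measurableSet_Ioi hb
        _ = θ^(n-n₀) * K2 := by rw [MeasureTheory.integral_const_mul]
    -- middle piece
    have hEnneg : ∀ t ∈ Set.Ioc (t1-δ) (t1+δ), Real.exp (-t) * g t ^ n * q t ≤ 0 := by
      intro t ht
      have ht0' : (0:ℝ) < t := by have := ht.1; linarith
      have hg0 : 0 ≤ g t := hgnonneg t ht0'.le
      have hqt : q t ≤ -ε := hqneg t ⟨ht.1.le, ht.2⟩
      apply mul_nonpos_of_nonneg_of_nonpos (by positivity)
      linarith
    have hmid : ∫ t in Set.Ioc (t1-δ) (t1+δ), Real.exp (-t) * g t ^ n * q t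
        ≤ -(θ'^n * (2*ρ*ε*Real.exp (-(t1+ρ)))) := by
      have hsubA : Set.Ioc (t1-δ) (t1-ρ) ⊆ Set.Ioi (0:ℝ) := by
        intro t ht; simp only [Set.mem_Ioi]; have := ht.1; linarith
      have hsubB : Set.Ioc (t1-ρ) (t1+ρ) ⊆ Set.Ioi (0:ℝ) := by
        intro t ht; simp only [Set.mem_Ioi]; have := ht.1; linarith
      have hsubC : Set.Ioc (t1+ρ) (t1+δ) ⊆ Set.Ioi (0:ℝ) := by
        intro t ht; simp only [Set.mem_Ioi]; have := ht.1; linarith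
      have hsplitA : ∫ t in Set.Ioc (t1-δ) (t1+δ), Real.exp (-t) * g t ^ n * q t
          = ((∫ t in Set.Ioc (t1-δ) (t1-ρ), Real.exp (-t) * g t ^ n * q t)
            + ∫ t in Set.Ioc (t1-ρ) (t1+ρ), Real.exp (-t) * g t ^ n * q t)
            + ∫ t in Set.Ioc (t1+ρ) (t1+δ), Real.exp (-t) * g t ^ n * q t := by
        rw [← MeasureTheory.setIntegral_union (Set.Ioc_disjoint_Ioc_of_le le_rfl) measurableSet_Ioc
          (hEnint.mono_set hsubA) (hEnint.mono_set hsubB),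
          Set.Ioc_union_Ioc_eq_Ioc (by linarith : t1-δ ≤ t1-ρ) (by linarith : t1-ρ ≤ t1+ρ)]
        rw [← MeasureTheory.setIntegral_union (Set.Ioc_disjoint_Ioc_of_le le_rfl) measurableSet_Ioc
          ((hEnint.mono_set hsub4).mono_set (by
            apply Set.Ioc_subset_Ioc le_rfl
            linarith)) (hEnint.mono_set hsubC),
          Set.Ioc_union_Ioc_eq_Ioc (by linarith : t1-δ ≤ t1+ρ) (by linarith : t1+ρ ≤ t1+δ)]
      have hA : ∫ t in Set.Ioc (t1-δ) (t1-ρ), Real.exp (-t) * g t ^ n * q t ≤ 0 := by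
        apply MeasureTheory.setIntegral_nonpos measurableSet_Ioc
        intro t ht
        exact hEnneg t ⟨ht.1, by linarith [ht.2]⟩
      have hC' : ∫ t in Set.Ioc (t1+ρ) (t1+δ), Real.exp (-t) * g t ^ n * q t ≤ 0 := by
        apply MeasureTheory.setIntegral_nonpos measurableSet_Ioc
        intro t ht
        exact hEnneg t ⟨by linarith [ht.1], ht.2⟩
      have hB : ∫ t in Set.Ioc (t1-ρ) (t1+ρ), Real.exp (-t) * g t ^ n * q t
          ≤ -(θ'^n * (2*ρ*ε*Real.exp (-(t1+ρ)))) := by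
        have hb : ∀ t ∈ Set.Ioc (t1-ρ) (t1+ρ),
            Real.exp (-t) * g t ^ n * q t ≤ (Real.exp (-(t1+ρ)) * θ'^n) * (-ε) := by
          intro t ht
          have ht0' : (0:ℝ) < t := by have := ht.1; linarith
          have hqt : q t ≤ -ε := hqneg t ⟨by linarith [ht.1], by linarith [ht.2]⟩
          have hgt : θ' ≤ g t := hgρ t ⟨ht.1.le, ht.2⟩
          have hgpow : θ'^n ≤ g t ^ n := pow_le_pow_left₀ hθ'pos.le hgt n
          have hexp : Real.exp (-(t1+ρ)) ≤ Real.exp (-t) := Real.exp_le_exp.2 (by linarith [ht.2])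
          have hw : Real.exp (-(t1+ρ)) * θ'^n ≤ Real.exp (-t) * g t ^ n := by
            apply mul_le_mul hexp hgpow (by positivity) (Real.exp_nonneg _)
          calc Real.exp (-t) * g t ^ n * q t ≤ Real.exp (-t) * g t ^ n * (-ε) := by
                apply mul_le_mul_of_nonneg_left hqt
                have := hgnonneg t ht0'.le
                positivity
            _ ≤ (Real.exp (-(t1+ρ)) * θ'^n) * (-ε) := by
                apply mul_le_mul_of_nonpos_right hw
                linarith
        calc ∫ t in Set.Ioc (t1-ρ) (t1+ρ), Real.exp (-t) * g t ^ n * q t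
            ≤ ∫ _t in Set.Ioc (t1-ρ) (t1+ρ), (Real.exp (-(t1+ρ)) * θ'^n) * (-ε) :=
              MeasureTheory.setIntegral_mono_on (hEnint.mono_set hsubB)
                (integrableOn_const (by
                  rw [Real.volume_Ioc]
                  exact ENNReal.ofReal_ne_top)) measurableSet_Ioc hb
          _ = -(θ'^n * (2*ρ*ε*Real.exp (-(t1+ρ)))) := by
              rw [MeasureTheory.setIntegral_const, Real.volume_real_Ioc]
              rw [show t1+ρ - (t1-ρ) = 2*ρ by ring, max_eq_left (by linarith)]
              simp only [smul_eq_mul]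
              ring
      linarith [hsplitA, hA, hB, hC']
    rw [hsplit1, hsplit2] at h0
    linarith [hleft, hright, hmid, h0]
  -- contradiction via n → ∞
  set r : ℝ := θ/θ' with hrdef
  have hr0 : 0 ≤ r := div_nonneg hθpos.le hθ'pos.le
  have hr1 : r < 1 := (div_lt_one hθ'pos).2 hθ'1
  set M : ℝ := K1 + K2/θ^n₀ with hMdef
  have hM0 : 0 ≤ M :=
    add_nonneg hK1nonneg (div_nonneg hK2nonneg (pow_nonneg hθpos.le n₀))
  set c₀ : ℝ := 2*ρ*ε*Real.exp (-(t1+ρ)) with hc₀def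
  have hc₀ : 0 < c₀ :=
    mul_pos (mul_pos (mul_pos two_pos hρ) hε) (Real.exp_pos _)
  have htendr : Tendsto (fun n : ℕ => r^n * M) atTop (nhds 0) := by
    have := (tendsto_pow_atTop_nhds_zero_of_lt_one hr0 hr1).mul_const M
    simpa using this
  have hev : ∀ᶠ n : ℕ in atTop, r^n * M < c₀ :=
    htendr.eventually_lt_const hc₀
  obtain ⟨n, hnineq, hnge⟩ := (hev.and (eventually_ge_atTop n₀)).exists
  have hmain := main n hnge
  have hθn : θ^n = r^n * θ'^n := by
    rw [hrdef, div_pow]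
    field_simp
  have hθnn₀ : θ^(n-n₀) = θ^n / θ^n₀ := pow_sub₀ θ (ne_of_gt hθpos) hnge
  have hcombine : θ'^n * c₀ ≤ θ'^n * (r^n * M) := by
    calc θ'^n * c₀ ≤ θ^n * K1 + θ^(n-n₀) * K2 := hmain
      _ = θ'^n * (r^n * M) := by
          rw [hθnn₀, hθn, hMdef]
          field_simp
  have : c₀ ≤ r^n * M := le_of_mul_le_mul_left hcombine (by positivity)
  linarith

section Final
variable {f : ℝ → ℝ} {a : ℝ} {ν : Measure ℝ}

lemma f_mono
    (hνint : ∫⁻ s in Set.Ioi (0:ℝ), ENNReal.ofReal (min s 1) ∂ν < ⊤)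
    (hf : ∀ φ > (0:ℝ), f φ = a + ∫ s in Set.Ioi (0:ℝ), (1 - Real.exp (-φ * s)) ∂ν)
    {φ ψ : ℝ} (hφ : 0 < φ) (hle : φ ≤ ψ) : f φ ≤ f ψ := by
  have hψ : 0 < ψ := lt_of_lt_of_le hφ hle
  rw [hf _ hφ, hf _ hψ]
  apply add_le_add_right
  apply MeasureTheory.setIntegral_mono_on (integrable1 hνint hφ) (integrable1 hνint hψ)
    measurableSet_Ioi
  intro s hs
  simp only [Set.mem_Ioi] at hs
  have : Real.exp (-ψ * s) ≤ Real.exp (-φ * s) := Real.exp_le_exp.2 (by nlinarith)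
  linarith

end Final
end S19

open MeasureTheory Set Filter intervalIntegral

/-- Let `f` be a Bernstein function with `b = 0` and `ν(0,∞) = ∞`, let `q(λ,·)` be the
continuous exponentially bounded function with Laplace transform
`φ ↦ (f(φ)/φ)·1/(f(φ)−λ)` for a fixed `λ < 0`, and suppose `f` is regularly varying at
`0+` with index `ρ ∈ [0,1)`.  Then `Q(λ,t) = ∫₀^t q(λ,s) ds → ∞` as `t → ∞`;
that is, `∫₀^∞ q(λ,t) dt = ∞`. -/
theorem stmt19 (f : ℝ → ℝ) (a : ℝ) (ha : 0 ≤ a) (ν : Measure ℝ)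
    (hνint : ∫⁻ s in Set.Ioi (0:ℝ), ENNReal.ofReal (min s 1) ∂ν < ⊤)
    (hνinf : ν (Set.Ioi (0:ℝ)) = ⊤)
    (hf : ∀ φ > (0:ℝ), f φ = a + ∫ s in Set.Ioi (0:ℝ), (1 - Real.exp (-φ * s)) ∂ν)
    (lam : ℝ) (hlam : lam < 0)
    (ρ : ℝ) (hρ0 : 0 ≤ ρ) (hρ1 : ρ < 1)
    (hrv : ∀ c > (0:ℝ),
      Tendsto (fun x => f (c * x) / f x) (nhdsWithin 0 (Set.Ioi 0)) (nhds (c ^ ρ)))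
    (q : ℝ → ℝ) (hqcont : Continuous q)
    (hqbdd : ∃ C c : ℝ, ∀ t ≥ (0:ℝ), |q t| ≤ C * Real.exp (c * t))
    (hqLT : ∀ φ > (0:ℝ),
      ∫ t in Set.Ioi (0:ℝ), Real.exp (-φ * t) * q t = (f φ / φ) * (1 / (f φ - lam))) :
    Tendsto (fun t => ∫ s in (0:ℝ)..t, q s) atTop atTop := by
  obtain ⟨C, c, hqb⟩ := hqbdd
  -- Step 1 : q is nonnegative on [0,∞)
  have hqnn : ∀ t ≥ (0:ℝ), 0 ≤ q t := by
    apply S19.q_nonneg_of_moments hqcont hqb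
    intro φ hφ m
    exact S19.q_moments ha hνint hνinf hf hlam hqcont hqLT hφ m
  -- Step 2 : the Laplace transform is unbounded as φ → 0+
  have hfpos : ∀ {φ : ℝ}, 0 < φ → 0 < f φ := fun {φ} hφ => S19.f_pos ha hνint hνinf hf hφ
  have hunbdd : ∀ B : ℝ, ∃ φ : ℝ, 0 < φ ∧
      B < ∫ t in Set.Ioi (0:ℝ), Real.exp (-φ * t) * q t := by
    intro B
    -- regular variation at 2
    have h2 := hrv 2 (by norm_num)
    have h2ρ : (2:ℝ)^ρ < 2 := by
      calc (2:ℝ)^ρ < (2:ℝ)^(1:ℝ) := by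
            apply Real.rpow_lt_rpow_of_exponent_lt (by norm_num) hρ1
        _ = 2 := Real.rpow_one 2
    set κ : ℝ := ((2:ℝ)^ρ + 2)/2 with hκdef
    have hκ1 : (2:ℝ)^ρ < κ := by
      rw [hκdef]; linarith
    have hκ2 : κ < 2 := by rw [hκdef]; linarith
    have hκpos : 0 < κ := by
      have : (0:ℝ) < (2:ℝ)^ρ := Real.rpow_pos_of_pos (by norm_num) ρ
      rw [hκdef]; linarith
    have hev : ∀ᶠ x in nhdsWithin 0 (Set.Ioi 0), f (2*x)/f x < κ :=
      h2.eventually (tendsto_id.eventually_lt_const hκ1)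
    obtain ⟨ε, hε, hsub⟩ := Metric.mem_nhdsWithin_iff.1 hev
    have hprop : ∀ x : ℝ, dist x 0 < ε → x ∈ Set.Ioi (0:ℝ) → f (2*x)/f x < κ := by
      intro x hd hx
      exact hsub ⟨Metric.mem_ball.2 hd, hx⟩
    set x₀ : ℝ := ε/2 with hx₀def
    have hx₀ : 0 < x₀ := by rw [hx₀def]; linarith
    have hchain : ∀ x : ℝ, 0 < x → x ≤ x₀ → f (2*x) < κ * f x := by
      intro x hx hxle
      have hdist : dist x 0 < ε := by
        rw [Real.dist_eq, sub_zero, abs_of_pos hx]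
        rw [hx₀def] at hxle
        linarith
      have := hprop x hdist (Set.mem_Ioi.2 hx)
      have hfx : 0 < f x := hfpos hx
      rw [div_lt_iff₀ hfx] at this
      linarith
    -- iterate
    have hiter : ∀ i : ℕ, f x₀ ≤ κ^i * f (x₀ / 2^i) := by
      intro i
      induction i with
      | zero => simp
      | succ i ih =>
          have hxi : (0:ℝ) < x₀ / 2^(i+1) := by positivity
          have hxile : x₀ / 2^(i+1) ≤ x₀ := by
            rw [div_le_iff₀ (by positivity)]
            nlinarith [one_le_pow₀ (by norm_num : (1:ℝ) ≤ 2) (n := i+1), hx₀.le]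
          have hstep := hchain _ hxi hxile
          have e : 2 * (x₀ / 2^(i+1)) = x₀ / 2^i := by
            field_simp
            ring
          rw [e] at hstep
          calc f x₀ ≤ κ^i * f (x₀ / 2^i) := ih
            _ ≤ κ^i * (κ * f (x₀ / 2^(i+1))) := by
                apply mul_le_mul_of_nonneg_left (le_of_lt hstep) (by positivity)
            _ = κ^(i+1) * f (x₀ / 2^(i+1)) := by ring
    -- lower bound for the Laplace transform at x₀/2^i
    set c₁ : ℝ := (f x₀ / x₀) * (1 / (f x₀ - lam)) with hc₁def
    have hfx₀ : 0 < f x₀ := hfpos hx₀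
    have hc₁ : 0 < c₁ := by
      have h1 : 0 < f x₀ - lam := by linarith
      rw [hc₁def]
      positivity
    have hlow : ∀ i : ℕ, c₁ * (2/κ)^i ≤ ∫ t in Set.Ioi (0:ℝ),
        Real.exp (-(x₀ / 2^i) * t) * q t := by
      intro i
      set y : ℝ := x₀ / 2^i with hydef
      have hy : 0 < y := by rw [hydef]; positivity
      have hyle : y ≤ x₀ := by
        rw [hydef, div_le_iff₀ (by positivity)]
        nlinarith [one_le_pow₀ (by norm_num : (1:ℝ) ≤ 2) (n := i), hx₀.le]
      rw [hqLT y hy]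
      have hfy : 0 < f y := hfpos hy
      have hfylam : 0 < f y - lam := by linarith
      have hfx₀lam : 0 < f x₀ - lam := by linarith
      have hmono : f y ≤ f x₀ := S19.f_mono hνint hf hy hyle
      have h1 : 1 / (f x₀ - lam) ≤ 1 / (f y - lam) := by
        apply one_div_le_one_div_of_le hfylam
        linarith
      have h2 : f x₀ / κ^i ≤ f y := by
        have := hiter i
        rw [div_le_iff₀ (by positivity)]
        calc f x₀ ≤ κ^i * f (x₀/2^i) := this
          _ = f y * κ^i := by rw [hydef]; ring
      have h3 : (f x₀/x₀) * (2/κ)^i ≤ f y / y := by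
        have e : f y / y = f y * (2^i / x₀) := by
          rw [hydef]
          field_simp
        rw [e]
        calc (f x₀/x₀) * (2/κ)^i = (f x₀/κ^i) * (2^i/x₀) := by
              rw [div_pow]
              field_simp
          _ ≤ f y * (2^i/x₀) := by
              apply mul_le_mul_of_nonneg_right h2 (by positivity)
      calc c₁ * (2/κ)^i = ((f x₀/x₀) * (2/κ)^i) * (1/(f x₀ - lam)) := by
            rw [hc₁def]; ring
        _ ≤ (f y / y) * (1/(f x₀ - lam)) := by
            apply mul_le_mul_of_nonneg_right h3 (by positivity)
        _ ≤ (f y / y) * (1/(f y - lam)) := by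
            apply mul_le_mul_of_nonneg_left h1 (by positivity)
    -- choose i large
    have h2κ : 1 < 2/κ := by
      rw [lt_div_iff₀ hκpos]
      linarith
    obtain ⟨i, hi⟩ := pow_unbounded_of_one_lt (B/c₁ + 1) h2κ
    refine ⟨x₀ / 2^i, by positivity, ?_⟩
    have : B < c₁ * (2/κ)^i := by
      rw [← div_lt_iff₀' hc₁] at *
      calc B/c₁ < B/c₁ + 1 := by linarith
        _ < (2/κ)^i := hi
        _ = (2/κ)^i := rfl
    calc B < c₁ * (2/κ)^i := this
      _ ≤ _ := hlow i
  -- Step 3 : the improper integral of q diverges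
  set F : ℝ → ENNReal := fun t => ENNReal.ofReal (q t) with hFdef
  have hFmeas : Measurable F := hqcont.measurable.ennreal_ofReal
  have hlin : ∫⁻ t in Set.Ioi (0:ℝ), F t = ⊤ := by
    by_contra hfin
    have hfin' : ∫⁻ t in Set.Ioi (0:ℝ), F t < ⊤ := lt_top_iff_ne_top.2 hfin
    set S := ∫⁻ t in Set.Ioi (0:ℝ), F t with hSdef
    have hbound : ∀ φ : ℝ, 0 < φ →
        (∫ t in Set.Ioi (0:ℝ), Real.exp (-φ*t) * q t) ≤ S.toReal := by
      intro φ hφ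
      have hnn : 0 ≤ᵐ[volume.restrict (Set.Ioi (0:ℝ))] fun t => Real.exp (-φ*t) * q t := by
        filter_upwards [ae_restrict_mem measurableSet_Ioi] with t ht
        have := hqnn t (le_of_lt (Set.mem_Ioi.1 ht))
        positivity
      rw [MeasureTheory.integral_eq_lintegral_of_nonneg_ae hnn
        (((Real.continuous_exp.comp (continuous_const.mul continuous_id)).mul
          hqcont).aestronglyMeasurable)]
      apply ENNReal.toReal_mono hfin
      apply lintegral_mono_ae
      filter_upwards [ae_restrict_mem measurableSet_Ioi] with t ht
      apply ENNReal.ofReal_le_ofReal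
      have ht' : (0:ℝ) < t := Set.mem_Ioi.1 ht
      have h1 : Real.exp (-φ*t) ≤ 1 := by
        rw [← Real.exp_zero]
        apply Real.exp_le_exp.2
        nlinarith
      have h2 : 0 ≤ q t := hqnn t ht'.le
      nlinarith [Real.exp_nonneg (-φ*t)]
    obtain ⟨φ, hφ, hgt⟩ := hunbdd S.toReal
    exact absurd (hbound φ hφ) (not_le.2 hgt)
  -- Step 4 : partial integrals get arbitrarily large
  have hIoc : ∀ n : ℕ, IntegrableOn q (Set.Ioc (0:ℝ) (n:ℝ)) volume := by
    intro n
    exact (hqcont.continuousOn.integrableOn_compact isCompact_Icc).mono_set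
      Set.Ioc_subset_Icc_self
  have hIocfin : ∀ n : ℕ, ∫⁻ t in Set.Ioc (0:ℝ) (n:ℝ), F t < ⊤ := by
    intro n
    have h1 := (hIoc n).2
    rw [MeasureTheory.hasFiniteIntegral_iff_norm] at h1
    apply lt_of_le_of_lt _ h1
    apply lintegral_mono
    intro t
    apply ENNReal.ofReal_le_ofReal
    exact le_abs_self _
  have hQn : ∀ M : ℝ, ∃ n : ℕ, M ≤ ∫ s in (0:ℝ)..(n:ℝ), q s := by
    intro M
    rcases le_or_gt M 0 with hM | hM
    · exact ⟨0, by simpa using hM⟩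
    · set m : Measure ℝ := volume.withDensity F with hmdef
      have hmA : ∀ A : Set ℝ, MeasurableSet A → m A = ∫⁻ t in A, F t :=
        fun A hA => withDensity_apply F hA
      set s : ℕ → Set ℝ := fun n => Set.Ioc (0:ℝ) (n:ℝ) with hsdef
      have hmon : Monotone s := by
        intro i j hij
        apply Set.Ioc_subset_Ioc le_rfl
        exact_mod_cast hij
      have hunion : (⋃ n, s n) = Set.Ioi (0:ℝ) := by
        ext t
        simp only [hsdef, Set.mem_iUnion, Set.mem_Ioc, Set.mem_Ioi]
        constructor
        · rintro ⟨n, hn, _⟩; exact hn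
        · intro ht
          obtain ⟨n, hn⟩ := exists_nat_ge t
          exact ⟨n, ht, hn⟩
      have hsup : (⨆ n, m (s n)) = ⊤ := by
        rw [← hmon.directed_le.measure_iUnion, hunion,
          hmA _ measurableSet_Ioi]
        exact hlin
      have : ENNReal.ofReal M < ⨆ n, m (s n) := by
        rw [hsup]; exact ENNReal.ofReal_lt_top
      obtain ⟨n, hn⟩ := lt_iSup_iff.1 this
      rw [hmA _ measurableSet_Ioc] at hn
      refine ⟨n, ?_⟩
      have hqint : ∫ t in (0:ℝ)..(n:ℝ), q t = ∫ t in Set.Ioc (0:ℝ) (n:ℝ), q t :=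
        intervalIntegral.integral_of_le (Nat.cast_nonneg n)
      have hnn2 : 0 ≤ᵐ[volume.restrict (Set.Ioc (0:ℝ) (n:ℝ))] q := by
        filter_upwards [ae_restrict_mem measurableSet_Ioc] with t ht
        exact hqnn t ht.1.le
      have heq : ∫ t in Set.Ioc (0:ℝ) (n:ℝ), q t = (∫⁻ t in Set.Ioc (0:ℝ) (n:ℝ), F t).toReal := by
        rw [MeasureTheory.integral_eq_lintegral_of_nonneg_ae hnn2 hqcont.aestronglyMeasurable]
      rw [hqint, heq]
      have h3 : (ENNReal.ofReal M).toReal < (∫⁻ t in Set.Ioc (0:ℝ) (n:ℝ), F t).toReal :=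
        (ENNReal.toReal_lt_toReal ENNReal.ofReal_ne_top (ne_of_lt (hIocfin n))).2 hn
      rw [ENNReal.toReal_ofReal hM.le] at h3
      linarith
  -- Step 5 : conclude
  rw [tendsto_atTop]
  intro M
  obtain ⟨n, hn⟩ := hQn M
  filter_upwards [eventually_ge_atTop ((n:ℝ))] with t ht
  have hsplit : ∫ s in (0:ℝ)..t, q s
      = (∫ s in (0:ℝ)..(n:ℝ), q s) + ∫ s in (n:ℝ)..t, q s :=
    (intervalIntegral.integral_add_adjacent_intervals
      (hqcont.intervalIntegrable _ _) (hqcont.intervalIntegrable _ _)).symm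
  have htail : 0 ≤ ∫ s in (n:ℝ)..t, q s := by
    apply intervalIntegral.integral_nonneg ht
    intro u hu
    exact hqnn u (le_trans (Nat.cast_nonneg n) hu.1)
  rw [hsplit]
  linarith
end
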